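/- arXiv:2003.05368 — 4 statements merged into one kernel-verified Lean document; each statement's English description precedes it below -/
import Mathlib

section
/- Every complex root α of the polynomial P₅(T) = T⁸ − T⁷ + 2T⁶ − 4T⁵ + 16T⁴ − 20T³ + 50T² − 125T + 625 satisfies |α| = √5. -/
open Polynomial

noncomputable def P5 : Polynomial ℂ :=
  X ^ 8 - X ^ 7 + 2 * X ^ 6 - 4 * X ^ 5 + 16 * X ^ 4 - 20 * X ^ 3 + 50 * X ^ 2 - 125 * X + 625

noncomputable def Q4 : Polynomial ℂ := X ^ 4 - X ^ 3 - 18 * X ^ 2 + 11 * X + 46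

lemma Q4_natDegree : Q4.natDegree = 4 := by unfold Q4; compute_degree!

lemma Q4_ne_zero : Q4 ≠ 0 := fun h => by simpa [h] using Q4_natDegree

lemma Q4_eval (z : ℂ) : Q4.eval z = z^4 - z^3 - 18*z^2 + 11*z + 46 := by simp [Q4]

lemma exists_root (a b : ℝ) (hab : a ≤ b)
    (ha : 0 ≤ a^4 - a^3 - 18*a^2 + 11*a + 46)
    (hb : b^4 - b^3 - 18*b^2 + 11*b + 46 ≤ 0) :
    ∃ r ∈ Set.Icc a b, r^4 - r^3 - 18*r^2 + 11*r + 46 = 0 := by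
  have hc : ContinuousOn (fun x : ℝ => x^4 - x^3 - 18*x^2 + 11*x + 46) (Set.Icc a b) := by
    fun_prop
  obtain ⟨r, hr, hr0⟩ := intermediate_value_Icc' hab hc ⟨hb, ha⟩
  exact ⟨r, hr, hr0⟩

lemma exists_root' (a b : ℝ) (hab : a ≤ b)
    (ha : a^4 - a^3 - 18*a^2 + 11*a + 46 ≤ 0)
    (hb : 0 ≤ b^4 - b^3 - 18*b^2 + 11*b + 46) :
    ∃ r ∈ Set.Icc a b, r^4 - r^3 - 18*r^2 + 11*r + 46 = 0 := by
  have hc : ContinuousOn (fun x : ℝ => x^4 - x^3 - 18*x^2 + 11*x + 46) (Set.Icc a b) := by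
    fun_prop
  obtain ⟨r, hr, hr0⟩ := intermediate_value_Icc hab hc ⟨ha, hb⟩
  exact ⟨r, hr, hr0⟩

lemma real_root_sq_lt (x : ℝ) (hx : x^4 - x^3 - 18*x^2 + 11*x + 46 = 0) : x^2 < 20 := by
  by_contra h
  push_neg at h
  nlinarith [sq_nonneg x, sq_nonneg (x-1), sq_nonneg (x+1),
    mul_nonneg (sub_nonneg.mpr h) (sq_nonneg (x-1)), mul_nonneg (sub_nonneg.mpr h) (sq_nonneg x)]

lemma Q4_root_real (z : ℂ) (hz : z^4 - z^3 - 18*z^2 + 11*z + 46 = 0) : z.im = 0 := by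
  by_contra ht
  obtain ⟨r1, hr1m, hr1⟩ := exists_root (-4) (-3) (by norm_num) (by norm_num) (by norm_num)
  obtain ⟨r2, hr2m, hr2⟩ := exists_root' (-2) (-1) (by norm_num) (by norm_num) (by norm_num)
  obtain ⟨r3, hr3m, hr3⟩ := exists_root 2 3 (by norm_num) (by norm_num) (by norm_num)
  have hzc : ((starRingEnd ℂ) z)^4 - ((starRingEnd ℂ) z)^3 - 18*((starRingEnd ℂ) z)^2
      + 11*((starRingEnd ℂ) z) + 46 = 0 := by
    have := congrArg (starRingEnd ℂ) hz
    simpa [map_sub, map_add, map_mul, map_pow, map_ofNat] using this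
  have memroot : ∀ w : ℂ, w^4 - w^3 - 18*w^2 + 11*w + 46 = 0 → w ∈ Q4.roots.toFinset := by
    intro w hw
    rw [Multiset.mem_toFinset, mem_roots Q4_ne_zero, IsRoot, Q4_eval]
    exact hw
  have castroot : ∀ r : ℝ, r^4 - r^3 - 18*r^2 + 11*r + 46 = 0 →
      ((r:ℂ)^4 - (r:ℂ)^3 - 18*(r:ℂ)^2 + 11*(r:ℂ) + 46 = 0) := fun r hr => by
    exact_mod_cast congrArg (fun x : ℝ => (x : ℂ)) hr
  set s : Finset ℂ := {z, (starRingEnd ℂ) z, (r1:ℂ), (r2:ℂ), (r3:ℂ)} with hs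
  have hsub : s ⊆ Q4.roots.toFinset := by
    intro w hw
    simp only [hs, Finset.mem_insert, Finset.mem_singleton] at hw
    rcases hw with rfl|rfl|rfl|rfl|rfl
    · exact memroot _ hz
    · exact memroot _ hzc
    · exact memroot _ (castroot _ hr1)
    · exact memroot _ (castroot _ hr2)
    · exact memroot _ (castroot _ hr3)
  have h12 : r1 ≠ r2 := fun h => by
    rw [h] at hr1m; have := hr1m.2; have := hr2m.1; linarith
  have h13 : r1 ≠ r3 := fun h => by
    rw [h] at hr1m; have := hr1m.2; have := hr3m.1; linarith
  have h23 : r2 ≠ r3 := fun h => by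
    rw [h] at hr2m; have := hr2m.2; have := hr3m.1; linarith
  have e12 : (r1:ℂ) ≠ (r2:ℂ) := by exact_mod_cast h12
  have e13 : (r1:ℂ) ≠ (r3:ℂ) := by exact_mod_cast h13
  have e23 : (r2:ℂ) ≠ (r3:ℂ) := by exact_mod_cast h23
  have hzr : ∀ r : ℝ, z ≠ (r:ℂ) := fun r h => ht (by rw [h]; simp)
  have hzcr : ∀ r : ℝ, (starRingEnd ℂ) z ≠ (r:ℂ) := by
    intro r h
    apply ht
    have h2 := congrArg Complex.im h
    simp [Complex.conj_im] at h2
    linarith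
  have hzzc : z ≠ (starRingEnd ℂ) z := fun h => by
    have := congrArg Complex.im h
    simp [Complex.conj_im] at this
    exact ht (by linarith)
  have hcard : s.card = 5 := by
    rw [hs,
      Finset.card_insert_of_notMem (by
        simp only [Finset.mem_insert, Finset.mem_singleton]
        rintro (h|h|h|h)
        exacts [hzzc h, hzr _ h, hzr _ h, hzr _ h]),
      Finset.card_insert_of_notMem (by
        simp only [Finset.mem_insert, Finset.mem_singleton]
        rintro (h|h|h)
        exacts [hzcr _ h, hzcr _ h, hzcr _ h]),
      Finset.card_insert_of_notMem (by
        simp only [Finset.mem_insert, Finset.mem_singleton]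
        rintro (h|h)
        exacts [e12 h, e13 h]),
      Finset.card_insert_of_notMem (by
        simp only [Finset.mem_singleton]
        exact fun h => e23 h),
      Finset.card_singleton]
  have h1 : s.card ≤ Q4.roots.toFinset.card := Finset.card_le_card hsub
  have h2 : Q4.roots.toFinset.card ≤ Multiset.card Q4.roots := Multiset.toFinset_card_le _
  have h3 : Multiset.card Q4.roots ≤ 4 := by
    have := Polynomial.card_roots' Q4
    rwa [Q4_natDegree] at this
  omega

/-- Every complex root `α` of `P₅` satisfies `|α| = √5`. -/
theorem P5_roots_abs (α : ℂ) (hα : P5.eval α = 0) : ‖α‖ = Real.sqrt 5 := by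
  have hev : α^8 - α^7 + 2*α^6 - 4*α^5 + 16*α^4 - 20*α^3 + 50*α^2 - 125*α + 625 = 0 := by
    have h : P5.eval α = α^8 - α^7 + 2*α^6 - 4*α^5 + 16*α^4 - 20*α^3 + 50*α^2 - 125*α + 625 := by
      simp [P5]
    rwa [h] at hα
  have hα0 : α ≠ 0 := by
    intro h; rw [h] at hev; norm_num at hev
  set β : ℂ := α + 5/α with hβ
  have hβα : β * α = α^2 + 5 := by
    rw [hβ]; field_simp
  have hq : β^4 - β^3 - 18*β^2 + 11*β + 46 = 0 := by
    have h4 : α^4 ≠ 0 := pow_ne_zero _ hα0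
    have key : (β^4 - β^3 - 18*β^2 + 11*β + 46) * α^4
        = α^8 - α^7 + 2*α^6 - 4*α^5 + 16*α^4 - 20*α^3 + 50*α^2 - 125*α + 625 := by
      linear_combination ((β*α)^3 + (β*α)^2*(α^2+5) + (β*α)*(α^2+5)^2 + (α^2+5)^3
        - ((β*α)^2 + (β*α)*(α^2+5) + (α^2+5)^2)*α - 18*(β*α + (α^2+5))*α^2 + 11*α^3) * hβα
    rw [hev] at key
    exact (mul_eq_zero.mp key).resolve_right h4
  have hβim : β.im = 0 := Q4_root_real β hq
  set b : ℝ := β.re with hb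
  have hβb : β = (b : ℂ) := by
    apply Complex.ext <;> simp [hb, hβim]
  have hqr : b^4 - b^3 - 18*b^2 + 11*b + 46 = 0 := by
    have h := hq
    rw [hβb] at h
    exact_mod_cast h
  have hb2 : b^2 < 20 := real_root_sq_lt b hqr
  have hquad : α^2 - (b:ℂ)*α + 5 = 0 := by
    rw [hβb] at hβα
    linear_combination -hβα
  have hquadc : ((starRingEnd ℂ) α)^2 - (b:ℂ)*((starRingEnd ℂ) α) + 5 = 0 := by
    have h := congrArg (starRingEnd ℂ) hquad
    simpa [map_sub, map_add, map_mul, map_pow, map_ofNat] using h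
  have hfac : (α - (starRingEnd ℂ) α) * (α + (starRingEnd ℂ) α - (b:ℂ)) = 0 := by
    linear_combination hquad - hquadc
  rcases mul_eq_zero.mp hfac with h | h
  · exfalso
    have him : α.im = 0 := by
      have h2 := congrArg Complex.im h
      simp [Complex.conj_im] at h2
      linarith
    have hαr : α = ((α.re : ℝ) : ℂ) := by
      apply Complex.ext <;> simp [him]
    set x : ℝ := α.re
    have hx : x^2 - b*x + 5 = 0 := by
      have h2 := hquad
      rw [hαr] at h2
      exact_mod_cast h2
    nlinarith [sq_nonneg (2*x - b)]
  · have hsum : α + (starRingEnd ℂ) α = (b:ℂ) := by linear_combination h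
    have hns : α * (starRingEnd ℂ) α = 5 := by
      linear_combination α * hsum - hquad
    have hns' : (Complex.normSq α : ℂ) = 5 := by
      rw [← Complex.mul_conj]; exact hns
    have hns5 : Complex.normSq α = 5 := by exact_mod_cast hns'
    rw [Complex.norm_def, hns5]
end

section
/- There exist complex roots β₁, β₂, β₃, β₄ of P₅(T) = T⁸ − T⁷ + 2T⁶ − 4T⁵ + 16T⁴ − 20T³ + 50T² − 125T + 625, pairwise distinct and each with strictly positive imaginary part, satisfying the nontrivial multiplicative relation β₁β₄ = β₂β₃. -/
open Polynomial

set_option maxHeartbeats 4000000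

private lemma aux_quad (g w : ℝ) (hw : w ^ 2 = 20 - g ^ 2) :
    (Complex.mk (g/2) (w/2)) ^ 2 = (g : ℂ) * Complex.mk (g/2) (w/2) - 5 := by
  apply Complex.ext
  · show (Complex.mk (g/2) (w/2) ^ 2).re = _
    rw [pow_two]
    simp only [Complex.mul_re, Complex.sub_re, Complex.ofReal_re, Complex.ofReal_im]
    show g/2 * (g/2) - w/2 * (w/2) = g * (g/2) - 0 * (w/2) - (5:ℂ).re
    have h5 : ((5:ℂ)).re = 5 := by norm_num
    rw [h5]
    linear_combination (-(1:ℝ)/4) * hw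
  · rw [pow_two]
    simp only [Complex.mul_im, Complex.sub_im, Complex.ofReal_re, Complex.ofReal_im]
    show g/2 * (w/2) + w/2 * (g/2) = g * (w/2) + 0 * (g/2) - (5:ℂ).im
    have h5 : ((5:ℂ)).im = 0 := by norm_num
    rw [h5]
    ring

private lemma aux_root (g w : ℝ) (hw : w ^ 2 = 20 - g ^ 2)
    (hg : g ^ 4 = g ^ 3 + 18 * g ^ 2 - 11 * g - 46) :
    P5.eval (Complex.mk (g/2) (w/2)) = 0 := by
  set β : ℂ := Complex.mk (g/2) (w/2) with hβ
  have hb : β ^ 2 = (g : ℂ) * β - 5 := aux_quad g w hw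
  have hgc : (g : ℂ) ^ 4 = (g : ℂ) ^ 3 + 18 * (g : ℂ) ^ 2 - 11 * (g : ℂ) - 46 := by
    have h2 := congrArg (fun x : ℝ => (x : ℂ)) hg
    push_cast at h2
    exact h2
  show P5.eval β = 0
  simp only [P5, eval_add, eval_sub, eval_mul, eval_pow, eval_X, eval_ofNat]
  linear_combination (β^6 + ((g:ℂ) - 1)*β^5 + ((g:ℂ)^2 - (g:ℂ) - 3)*β^4 + ((g:ℂ)^3 - (g:ℂ)^2 - 8*(g:ℂ) + 1)*β^3 + ((g:ℂ)^4 - (g:ℂ)^3 - 13*(g:ℂ)^2 + 6*(g:ℂ) + 31)*β^2 + ((g:ℂ)^5 - (g:ℂ)^4 - 18*(g:ℂ)^3 + 11*(g:ℂ)^2 + 71*(g:ℂ) - 25)*β + ((g:ℂ)^6 - (g:ℂ)^5 - 23*(g:ℂ)^4 + 16*(g:ℂ)^3 + 136*(g:ℂ)^2 - 55*(g:ℂ) - 105)) * hb + (((g:ℂ)^3 - 10*(g:ℂ))*β - 5*(g:ℂ)^2 + 25) * hgc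

private lemma r_bnds {t r : ℝ} (htl : (0.22597:ℝ) ≤ t) (htu : t ≤ 0.225971)
    (hr0 : 0 < r) (hr2 : r^2 = 1 - 4*t) : (0.31002:ℝ) ≤ r ∧ r ≤ 0.31004 := by
  constructor <;> nlinarith

private lemma a_bnds {t r p a : ℝ} (htl : (0.22597:ℝ) ≤ t) (htu : t ≤ 0.225971)
    (hrl : (0.31002:ℝ) ≤ r) (hru : r ≤ 0.31004) (hr0 : 0 < r)
    (hpl : (0.34498:ℝ) ≤ p) (hpu : p ≤ 0.34499)
    (har : a * r = p*(18+t) - 11) : (-15.2004:ℝ) ≤ a ∧ a ≤ -15.1985 := by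
  have hAu : p*(18+t) - 11 ≤ -4.71222 := by nlinarith
  have hAl : -4.71241 ≤ p*(18+t) - 11 := by nlinarith
  constructor <;> nlinarith

private lemma b_bnds {t r q b : ℝ} (htl : (0.22597:ℝ) ≤ t) (htu : t ≤ 0.225971)
    (hrl : (0.31002:ℝ) ≤ r) (hru : r ≤ 0.31004) (hr0 : 0 < r)
    (hql : (0.65501:ℝ) ≤ q) (hqu : q ≤ 0.65502)
    (hbr : b * r = 11 - q*(18+t)) : (-3.0275:ℝ) ≤ b ∧ b ≤ -3.0259 := by
  have hBu : 11 - q*(18+t) ≤ -0.93819 := by nlinarith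
  have hBl : -0.93847 ≤ 11 - q*(18+t) := by nlinarith
  constructor <;> nlinarith

private lemma s1_bnds {p a s : ℝ} (hpl : (0.34498:ℝ) ≤ p) (hpu : p ≤ 0.34499)
    (hal : (-15.2004:ℝ) ≤ a) (hau : a ≤ -15.1985)
    (hs0 : 0 ≤ s) (hs : s^2 = p^2 - 4*a) : (7.8046:ℝ) ≤ s ∧ s ≤ 7.8052 := by
  constructor <;> nlinarith

private lemma s2_bnds {q b s : ℝ} (hql : (0.65501:ℝ) ≤ q) (hqu : q ≤ 0.65502)
    (hbl : (-3.0275:ℝ) ≤ b) (hbu : b ≤ -3.0259)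
    (hs0 : 0 ≤ s) (hs : s^2 = q^2 - 4*b) : (3.54:ℝ) ≤ s ∧ s ≤ 3.5412 := by
  constructor <;> nlinarith

private lemma w1_bnds {g w : ℝ} (hgl : (-3.7302:ℝ) ≤ g) (hgu : g ≤ -3.7298)
    (hw0 : 0 < w) (hw : w^2 = 20 - g^2) : (2.4669:ℝ) ≤ w ∧ w ≤ 2.4676 := by
  have hsq : (g - (-3.7302)) * ((-3.7298) - g) ≥ 0 := mul_nonneg (by linarith) (by linarith)
  constructor <;> nlinarith

private lemma w1D_pos {g : ℝ} (hgl : (-3.7302:ℝ) ≤ g) (hgu : g ≤ -3.7298) :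
    (0:ℝ) < 20 - g^2 := by
  have hsq : (g - (-3.7302)) * ((-3.7298) - g) ≥ 0 := mul_nonneg (by linarith) (by linarith)
  nlinarith

private lemma w2_bnds {g w : ℝ} (hgl : (-1.4431:ℝ) ≤ g) (hgu : g ≤ -1.4424)
    (hw0 : 0 < w) (hw : w^2 = 20 - g^2) : (4.2328:ℝ) ≤ w ∧ w ≤ 4.2333 := by
  have hsq : (g - (-1.4431)) * ((-1.4424) - g) ≥ 0 := mul_nonneg (by linarith) (by linarith)
  constructor <;> nlinarith

private lemma w2D_pos {g : ℝ} (hgl : (-1.4431:ℝ) ≤ g) (hgu : g ≤ -1.4424) :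
    (0:ℝ) < 20 - g^2 := by
  have hsq : (g - (-1.4431)) * ((-1.4424) - g) ≥ 0 := mul_nonneg (by linarith) (by linarith)
  nlinarith

private lemma w3_bnds {g w : ℝ} (hgl : (2.0975:ℝ) ≤ g) (hgu : g ≤ 2.0982)
    (hw0 : 0 < w) (hw : w^2 = 20 - g^2) : (3.9493:ℝ) ≤ w ∧ w ≤ 3.9498 := by
  have hsq : (g - (2.0975)) * ((2.0982) - g) ≥ 0 := mul_nonneg (by linarith) (by linarith)
  constructor <;> nlinarith

private lemma w3D_pos {g : ℝ} (hgl : (2.0975:ℝ) ≤ g) (hgu : g ≤ 2.0982) :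
    (0:ℝ) < 20 - g^2 := by
  have hsq : (g - (2.0975)) * ((2.0982) - g) ≥ 0 := mul_nonneg (by linarith) (by linarith)
  nlinarith

private lemma w4_bnds {g w : ℝ} (hgl : (4.0747:ℝ) ≤ g) (hgu : g ≤ 4.0751)
    (hw0 : 0 < w) (hw : w^2 = 20 - g^2) : (1.842:ℝ) ≤ w ∧ w ≤ 1.8431 := by
  have hsq : (g - (4.0747)) * ((4.0751) - g) ≥ 0 := mul_nonneg (by linarith) (by linarith)
  constructor <;> nlinarith

private lemma w4D_pos {g : ℝ} (hgl : (4.0747:ℝ) ≤ g) (hgu : g ≤ 4.0751) :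
    (0:ℝ) < 20 - g^2 := by
  have hsq : (g - (4.0747)) * ((4.0751) - g) ≥ 0 := mul_nonneg (by linarith) (by linarith)
  nlinarith

private lemma K_nonneg {r a b : ℝ}
    (hrl : (0.31002:ℝ) ≤ r) (hru : r ≤ 0.31004)
    (hal : (-15.2004:ℝ) ≤ a) (hau : a ≤ -15.1985)
    (hbl : (-3.0275:ℝ) ≤ b) (hbu : b ≤ -3.0259) :
    (0:ℝ) ≤ 20*(-r) - 40*(a-b) - 2*(a-b)*(a+b) + 2*a*(a-b) := by
  nlinarith [mul_nonneg (sub_nonneg.mpr hal) (sub_nonneg.mpr hbl),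
    mul_nonneg (sub_nonneg.mpr hau) (sub_nonneg.mpr hbu),
    sq_nonneg (a - b + 12.173), sq_nonneg (a + 15.1995), sq_nonneg (b + 3.0267)]

private lemma pos_comb {g1 g4 w1 w4 : ℝ}
    (hg1l : (-3.7302:ℝ) ≤ g1) (hg1u : g1 ≤ -3.7298)
    (hg4l : (4.0747:ℝ) ≤ g4) (hg4u : g4 ≤ 4.0751)
    (hw1l : (2.4669:ℝ) ≤ w1) (hw1u : w1 ≤ 2.4676)
    (hw4l : (1.842:ℝ) ≤ w4) (hw4u : w4 ≤ 1.8431) :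
    (0:ℝ) < g1*w4 + g4*w1 := by
  nlinarith [mul_nonneg (sub_nonneg.mpr hg1l) (sub_nonneg.mpr hw4l),
    mul_nonneg (sub_nonneg.mpr hg4l) (sub_nonneg.mpr hw1l)]

private lemma pos_comb' {g2 g3 w2 w3 : ℝ}
    (hg2l : (-1.4431:ℝ) ≤ g2) (hg2u : g2 ≤ -1.4424)
    (hg3l : (2.0975:ℝ) ≤ g3) (hg3u : g3 ≤ 2.0982)
    (hw2l : (4.2328:ℝ) ≤ w2) (hw2u : w2 ≤ 4.2333)
    (hw3l : (3.9493:ℝ) ≤ w3) (hw3u : w3 ≤ 3.9498) :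
    (0:ℝ) < g2*w3 + g3*w2 := by
  nlinarith [mul_nonneg (sub_nonneg.mpr hg2l) (sub_nonneg.mpr hw3l),
    mul_nonneg (sub_nonneg.mpr hg3l) (sub_nonneg.mpr hw2l)]

private lemma y_lt_x {w1 w2 w3 w4 : ℝ}
    (hw1l : (2.4669:ℝ) ≤ w1) (hw1u : w1 ≤ 2.4676)
    (hw2l : (4.2328:ℝ) ≤ w2) (hw2u : w2 ≤ 4.2333)
    (hw3l : (3.9493:ℝ) ≤ w3) (hw3u : w3 ≤ 3.9498)
    (hw4l : (1.842:ℝ) ≤ w4) (hw4u : w4 ≤ 1.8431) :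
    w1 * w4 < w2 * w3 := by
  nlinarith [mul_nonneg (sub_nonneg.mpr hw1l) (sub_nonneg.mpr hw4l),
    mul_nonneg (sub_nonneg.mpr hw2l) (sub_nonneg.mpr hw3l)]

/-- There are pairwise distinct complex roots `β₁, β₂, β₃, β₄` of `P₅`, each with strictly
positive imaginary part, satisfying the nontrivial relation `β₁β₄ = β₂β₃`. -/
theorem P5_nontrivial_relation :
    ∃ β₁ β₂ β₃ β₄ : ℂ,
      P5.eval β₁ = 0 ∧ P5.eval β₂ = 0 ∧ P5.eval β₃ = 0 ∧ P5.eval β₄ = 0 ∧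
      β₁ ≠ β₂ ∧ β₁ ≠ β₃ ∧ β₁ ≠ β₄ ∧ β₂ ≠ β₃ ∧ β₂ ≠ β₄ ∧ β₃ ≠ β₄ ∧
      0 < β₁.im ∧ 0 < β₂.im ∧ 0 < β₃.im ∧ 0 < β₄.im ∧
      β₁ * β₄ = β₂ * β₃ := by
  -- a real root of the resolvent cubic
  have hcont : ContinuousOn (fun x : ℝ => x^3 + 36*x^2 + 129*x) (Set.Icc (0.22597:ℝ) 0.225971) := by
    fun_prop
  obtain ⟨t, htmem, htval⟩ := intermediate_value_Icc (by norm_num : (0.22597:ℝ) ≤ 0.225971) hcont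
    (Set.mem_Icc.mpr ⟨by norm_num, by norm_num⟩ : (31:ℝ) ∈ Set.Icc _ _)
  obtain ⟨htl, htu⟩ := Set.mem_Icc.mp htmem
  have hc : t^3 = 31 - 36*t^2 - 129*t := by
    have h31 : t^3 + 36*t^2 + 129*t = 31 := htval
    linarith
  -- r = sqrt(1-4t)
  have h4t : (0:ℝ) < 1 - 4*t := by linarith
  obtain ⟨r, hr0, hr2⟩ : ∃ r : ℝ, 0 < r ∧ r^2 = 1 - 4*t :=
    ⟨Real.sqrt (1-4*t), Real.sqrt_pos.mpr h4t, Real.sq_sqrt h4t.le⟩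
  obtain ⟨hrl, hru⟩ := r_bnds htl htu hr0 hr2
  -- p, q
  obtain ⟨p, hp⟩ : ∃ p : ℝ, p = (1 - r)/2 := ⟨_, rfl⟩
  obtain ⟨q, hq⟩ : ∃ q : ℝ, q = (1 + r)/2 := ⟨_, rfl⟩
  have hpl : (0.34498:ℝ) ≤ p := by rw [hp]; linarith
  have hpu : p ≤ 0.34499 := by rw [hp]; linarith
  have hql : (0.65501:ℝ) ≤ q := by rw [hq]; linarith
  have hqu : q ≤ 0.65502 := by rw [hq]; linarith
  -- a, b
  obtain ⟨a, har⟩ : ∃ a : ℝ, a * r = p*(18+t) - 11 := ⟨(p*(18+t)-11)/r, div_mul_cancel₀ _ hr0.ne'⟩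
  obtain ⟨b, hbr⟩ : ∃ b : ℝ, b * r = 11 - q*(18+t) := ⟨(11 - q*(18+t))/r, div_mul_cancel₀ _ hr0.ne'⟩
  obtain ⟨hal, hau⟩ := a_bnds htl htu hrl hru hr0 hpl hpu har
  obtain ⟨hbl, hbu⟩ := b_bnds htl htu hrl hru hr0 hql hqu hbr
  -- s1, s2
  have hd1 : (0:ℝ) ≤ p^2 - 4*a := by nlinarith
  obtain ⟨s1, hs10, hs1⟩ : ∃ s : ℝ, 0 ≤ s ∧ s^2 = p^2 - 4*a :=
    ⟨Real.sqrt _, Real.sqrt_nonneg _, Real.sq_sqrt hd1⟩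
  obtain ⟨hs1l, hs1u⟩ := s1_bnds hpl hpu hal hau hs10 hs1
  have hd2 : (0:ℝ) ≤ q^2 - 4*b := by nlinarith
  obtain ⟨s2, hs20, hs2⟩ : ∃ s : ℝ, 0 ≤ s ∧ s^2 = q^2 - 4*b :=
    ⟨Real.sqrt _, Real.sqrt_nonneg _, Real.sq_sqrt hd2⟩
  obtain ⟨hs2l, hs2u⟩ := s2_bnds hql hqu hbl hbu hs20 hs2
  -- the four real numbers g i
  obtain ⟨g1, hg1⟩ : ∃ x : ℝ, x = (p - s1)/2 := ⟨_, rfl⟩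
  obtain ⟨g2, hg2⟩ : ∃ x : ℝ, x = (q - s2)/2 := ⟨_, rfl⟩
  obtain ⟨g3, hg3⟩ : ∃ x : ℝ, x = (q + s2)/2 := ⟨_, rfl⟩
  obtain ⟨g4, hg4⟩ : ∃ x : ℝ, x = (p + s1)/2 := ⟨_, rfl⟩
  have hg1l : (-3.7302:ℝ) ≤ g1 := by rw [hg1]; linarith
  have hg1u : g1 ≤ -3.7298 := by rw [hg1]; linarith
  have hg2l : (-1.4431:ℝ) ≤ g2 := by rw [hg2]; linarith
  have hg2u : g2 ≤ -1.4424 := by rw [hg2]; linarith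
  have hg3l : (2.0975:ℝ) ≤ g3 := by rw [hg3]; linarith
  have hg3u : g3 ≤ 2.0982 := by rw [hg3]; linarith
  have hg4l : (4.0747:ℝ) ≤ g4 := by rw [hg4]; linarith
  have hg4u : g4 ≤ 4.0751 := by rw [hg4]; linarith
  -- the w i
  have hD1 : (0:ℝ) < 20 - g1^2 := w1D_pos hg1l hg1u
  obtain ⟨w1, hw10, hw1⟩ : ∃ w : ℝ, 0 < w ∧ w^2 = 20 - g1^2 :=
    ⟨Real.sqrt _, Real.sqrt_pos.mpr hD1, Real.sq_sqrt hD1.le⟩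
  have hD2 : (0:ℝ) < 20 - g2^2 := w2D_pos hg2l hg2u
  obtain ⟨w2, hw20, hw2⟩ : ∃ w : ℝ, 0 < w ∧ w^2 = 20 - g2^2 :=
    ⟨Real.sqrt _, Real.sqrt_pos.mpr hD2, Real.sq_sqrt hD2.le⟩
  have hD3 : (0:ℝ) < 20 - g3^2 := w3D_pos hg3l hg3u
  obtain ⟨w3, hw30, hw3⟩ : ∃ w : ℝ, 0 < w ∧ w^2 = 20 - g3^2 :=
    ⟨Real.sqrt _, Real.sqrt_pos.mpr hD3, Real.sq_sqrt hD3.le⟩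
  have hD4 : (0:ℝ) < 20 - g4^2 := w4D_pos hg4l hg4u
  obtain ⟨w4, hw40, hw4⟩ : ∃ w : ℝ, 0 < w ∧ w^2 = 20 - g4^2 :=
    ⟨Real.sqrt _, Real.sqrt_pos.mpr hD4, Real.sq_sqrt hD4.le⟩
  obtain ⟨hw1l, hw1u⟩ := w1_bnds hg1l hg1u hw10 hw1
  obtain ⟨hw2l, hw2u⟩ := w2_bnds hg2l hg2u hw20 hw2
  obtain ⟨hw3l, hw3u⟩ := w3_bnds hg3l hg3u hw30 hw3
  obtain ⟨hw4l, hw4u⟩ := w4_bnds hg4l hg4u hw40 hw4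
  -- each g i is a root of the real Weil polynomial
  have hγ1 : g1^4 = g1^3 + 18*g1^2 - 11*g1 - 46 :=
    mul_right_cancel₀ (pow_ne_zero 2 hr0.ne') (by linear_combination (11*r^2 + (-18)*r^2*g1 + (-1)*r^2*g1^2 + 1*r^2*g1^3 + 9*r^2*s1 + (1/2)*r^2*s1*g1 + (-1/2)*r^2*s1*g1^2 + (-1/4)*r^2*s1^2 + (1/4)*r^2*s1^2*g1 + (-1/8)*r^2*s1^3 + (-9)*r^2*p + (-1/2)*r^2*p*g1 + (1/2)*r^2*p*g1^2 + (1/2)*r^2*p*s1 + (-1/2)*r^2*p*s1*g1 + (3/8)*r^2*p*s1^2 + (-1/4)*r^2*p^2 + (1/4)*r^2*p^2*g1 + (-3/8)*r^2*p^2*s1 + (1/8)*r^2*p^3) * hg1 + ((-9/2)*r^2 + (1/8)*r^2*s1 + (1/16)*r^2*s1^2 + (-1/4)*r^2*a + (-3/8)*r^2*p + (-1/4)*r^2*p*s1 + (7/16)*r^2*p^2) * hs1 + ((-11) + 18*p + 18*r + (-1/2)*r*s1 + 1*r*a + (3/2)*r*p + 1*r*p*s1 + (-2)*r*p^2 + 1*t*p)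 * har + ((-234) + 324*p + 161*r + (-11)*r*s1 + 31*r*p + 18*r*p*s1 + (-36)*r*p^2 + (-89/16)*r^2 + (1/8)*r^2*s1 + (71/8)*r^2*p + (1/4)*r^2*p*s1 + (-1/4)*r^2*p^2 + (-1/2)*r^2*p^2*s1 + (1/2)*r^2*p^3 + (-71/16)*r^3 + (1/4)*r^3*p*s1 + (-1/4)*r^3*p^2 + (1/16)*r^4 + (-1/8)*r^4*s1 + (1/8)*r^4*p + (-1/16)*r^5 + (-4)*t + 36*t*p + (1/4)*t*r + (1/2)*t*r*p + 1*t*r*p*s1 + (-2)*t*r*p^2 + (1/4)*t*r^2 + (-1/2)*t*r^2*s1 + 1*t*r^2*p + (-1/2)*t*r^3 + (1/2)*t^2 + 1*t^2*p + (-1/2)*t^2*r) * hp + ((-35) + (1/2)*r + (73/32)*r^2 + (-1/16)*r^2*s1 + (-1/16)*r^3 + (1/16)*r^3*s1 + (1/32)*r^4 + (-9)*t + (-1/8)*t*r + (1/8)*t*r^2 + (-1/4)*t^2) * hr2 + (1) * hc)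
  have hγ2 : g2^4 = g2^3 + 18*g2^2 - 11*g2 - 46 :=
    mul_right_cancel₀ (pow_ne_zero 2 hr0.ne') (by linear_combination (11*r^2 + (-18)*r^2*g2 + (-1)*r^2*g2^2 + 1*r^2*g2^3 + 9*r^2*s2 + (1/2)*r^2*s2*g2 + (-1/2)*r^2*s2*g2^2 + (-1/4)*r^2*s2^2 + (1/4)*r^2*s2^2*g2 + (-1/8)*r^2*s2^3 + (-9)*r^2*q + (-1/2)*r^2*q*g2 + (1/2)*r^2*q*g2^2 + (1/2)*r^2*q*s2 + (-1/2)*r^2*q*s2*g2 + (3/8)*r^2*q*s2^2 + (-1/4)*r^2*q^2 + (1/4)*r^2*q^2*g2 + (-3/8)*r^2*q^2*s2 + (1/8)*r^2*q^3) * hg2 + ((-9/2)*r^2 + (1/8)*r^2*s2 + (1/16)*r^2*s2^2 + (-1/4)*r^2*b + (-3/8)*r^2*q + (-1/4)*r^2*q*s2 + (7/16)*r^2*q^2) * hs2 + (11 + (-18)*q + 18*r + (-1/2)*r*s2 + 1*r*b + (3/2)*r*q + 1*r*q*s2 + (-2)*r*q^2 + (-1)*t*q) * hbr + ((-234) + 324*q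 + (-161)*r + 11*r*s2 + (-31)*r*q + (-18)*r*q*s2 + 36*r*q^2 + (-89/16)*r^2 + (1/8)*r^2*s2 + (71/8)*r^2*q + (1/4)*r^2*q*s2 + (-1/4)*r^2*q^2 + (-1/2)*r^2*q^2*s2 + (1/2)*r^2*q^3 + (71/16)*r^3 + (-1/4)*r^3*q*s2 + (1/4)*r^3*q^2 + (1/16)*r^4 + (-1/8)*r^4*s2 + (1/8)*r^4*q + (1/16)*r^5 + (-4)*t + 36*t*q + (-1/4)*t*r + (-1/2)*t*r*q + (-1)*t*r*q*s2 + 2*t*r*q^2 + (1/4)*t*r^2 + (-1/2)*t*r^2*s2 + 1*t*r^2*q + (1/2)*t*r^3 + (1/2)*t^2 + 1*t^2*q + (1/2)*t^2*r) * hq + ((-35) + (-1/2)*r + (73/32)*r^2 + (-1/16)*r^2*s2 + (1/16)*r^3 + (-1/16)*r^3*s2 + (1/32)*r^4 + (-9)*t + (1/8)*t*r + (1/8)*t*r^2 + (-1/4)*t^2) * hr2 + (1) * hc)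
  have hγ3 : g3^4 = g3^3 + 18*g3^2 - 11*g3 - 46 :=
    mul_right_cancel₀ (pow_ne_zero 2 hr0.ne') (by linear_combination (11*r^2 + (-18)*r^2*g3 + (-1)*r^2*g3^2 + 1*r^2*g3^3 + (-9)*r^2*s2 + (-1/2)*r^2*s2*g3 + (1/2)*r^2*s2*g3^2 + (-1/4)*r^2*s2^2 + (1/4)*r^2*s2^2*g3 + (1/8)*r^2*s2^3 + (-9)*r^2*q + (-1/2)*r^2*q*g3 + (1/2)*r^2*q*g3^2 + (-1/2)*r^2*q*s2 + (1/2)*r^2*q*s2*g3 + (3/8)*r^2*q*s2^2 + (-1/4)*r^2*q^2 + (1/4)*r^2*q^2*g3 + (3/8)*r^2*q^2*s2 + (1/8)*r^2*q^3) * hg3 + ((-9/2)*r^2 + (-1/8)*r^2*s2 + (1/16)*r^2*s2^2 + (-1/4)*r^2*b + (-3/8)*r^2*q + (1/4)*r^2*q*s2 + (7/16)*r^2*q^2) * hs2 + (11 + (-18)*q + 18*r + (1/2)*r*s2 + 1*r*b + (3/2)*r*q + (-1)*r*q*s2 + (-2)*r*q^2 + (-1)*t*q) * hbr + ((-234) +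 324*q + (-161)*r + (-11)*r*s2 + (-31)*r*q + 18*r*q*s2 + 36*r*q^2 + (-89/16)*r^2 + (-1/8)*r^2*s2 + (71/8)*r^2*q + (-1/4)*r^2*q*s2 + (-1/4)*r^2*q^2 + (1/2)*r^2*q^2*s2 + (1/2)*r^2*q^3 + (71/16)*r^3 + (1/4)*r^3*q*s2 + (1/4)*r^3*q^2 + (1/16)*r^4 + (1/8)*r^4*s2 + (1/8)*r^4*q + (1/16)*r^5 + (-4)*t + 36*t*q + (-1/4)*t*r + (-1/2)*t*r*q + 1*t*r*q*s2 + 2*t*r*q^2 + (1/4)*t*r^2 + (1/2)*t*r^2*s2 + 1*t*r^2*q + (1/2)*t*r^3 + (1/2)*t^2 + 1*t^2*q + (1/2)*t^2*r) * hq + ((-35) + (-1/2)*r + (73/32)*r^2 + (1/16)*r^2*s2 + (1/16)*r^3 + (1/16)*r^3*s2 + (1/32)*r^4 + (-9)*t + (1/8)*t*r + (1/8)*t*r^2 + (-1/4)*t^2) * hr2 + (1) * hc)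
  have hγ4 : g4^4 = g4^3 + 18*g4^2 - 11*g4 - 46 :=
    mul_right_cancel₀ (pow_ne_zero 2 hr0.ne') (by linear_combination (11*r^2 + (-18)*r^2*g4 + (-1)*r^2*g4^2 + 1*r^2*g4^3 + (-9)*r^2*s1 + (-1/2)*r^2*s1*g4 + (1/2)*r^2*s1*g4^2 + (-1/4)*r^2*s1^2 + (1/4)*r^2*s1^2*g4 + (1/8)*r^2*s1^3 + (-9)*r^2*p + (-1/2)*r^2*p*g4 + (1/2)*r^2*p*g4^2 + (-1/2)*r^2*p*s1 + (1/2)*r^2*p*s1*g4 + (3/8)*r^2*p*s1^2 + (-1/4)*r^2*p^2 + (1/4)*r^2*p^2*g4 + (3/8)*r^2*p^2*s1 + (1/8)*r^2*p^3) * hg4 + ((-9/2)*r^2 + (-1/8)*r^2*s1 + (1/16)*r^2*s1^2 + (-1/4)*r^2*a + (-3/8)*r^2*p + (1/4)*r^2*p*s1 + (7/16)*r^2*p^2) * hs1 + ((-11) + 18*p + 18*r + (1/2)*r*s1 + 1*r*a + (3/2)*r*p + (-1)*r*p*s1 + (-2)*r*p^2 + 1*t*p) * har + ((-234) + 324*p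 + 161*r + 11*r*s1 + 31*r*p + (-18)*r*p*s1 + (-36)*r*p^2 + (-89/16)*r^2 + (-1/8)*r^2*s1 + (71/8)*r^2*p + (-1/4)*r^2*p*s1 + (-1/4)*r^2*p^2 + (1/2)*r^2*p^2*s1 + (1/2)*r^2*p^3 + (-71/16)*r^3 + (-1/4)*r^3*p*s1 + (-1/4)*r^3*p^2 + (1/16)*r^4 + (1/8)*r^4*s1 + (1/8)*r^4*p + (-1/16)*r^5 + (-4)*t + 36*t*p + (1/4)*t*r + (1/2)*t*r*p + (-1)*t*r*p*s1 + (-2)*t*r*p^2 + (1/4)*t*r^2 + (1/2)*t*r^2*s1 + 1*t*r^2*p + (-1/2)*t*r^3 + (1/2)*t^2 + 1*t^2*p + (-1/2)*t^2*r) * hp + ((-35) + (1/2)*r + (73/32)*r^2 + (1/16)*r^2*s1 + (-1/16)*r^3 + (-1/16)*r^3*s1 + (1/32)*r^4 + (-9)*t + (-1/8)*t*r + (1/8)*t*r^2 + (-1/4)*t^2) * hr2 + (1) * hc)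
  -- products of paired roots
  have hA14 : g1 * g4 = a := by linear_combination (1*g4) * hg1 + ((-1/2)*s1 + (1/2)*p) * hg4 + ((-1/4)) * hs1
  have hB23 : g2 * g3 = b := by linear_combination (1*g3) * hg2 + ((-1/2)*s2 + (1/2)*q) * hg3 + ((-1/4)) * hs2
  -- x and y
  obtain ⟨y, hy⟩ : ∃ y : ℝ, y = w1 * w4 := ⟨_, rfl⟩
  obtain ⟨x, hx⟩ : ∃ x : ℝ, x = w2 * w3 := ⟨_, rfl⟩
  have hy0 : 0 < y := by rw [hy]; exact mul_pos hw10 hw40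
  have hx0 : 0 < x := by rw [hx]; exact mul_pos hw20 hw30
  have hY : y^2 = 400 - 20*p^2 + 40*a + a^2 := by rw [hy]; linear_combination (1*w4^2) * hw1 + (20 + (-1)*g1^2) * hw4 + ((-20)*g1 + 1*g1*g4^2 + 10*s1 + (-1/2)*s1*g4^2 + (-10)*p + (1/2)*p*g4^2) * hg1 + ((-20)*g4 + (-10)*s1 + (1/4)*s1^2*g4 + (1/8)*s1^3 + (-10)*p + (-1/2)*p*s1*g4 + (-1/8)*p*s1^2 + (1/4)*p^2*g4 + (-1/8)*p^2*s1 + (1/8)*p^3) * hg4 + ((-10) + (1/16)*s1^2 + (-1/4)*a + (-1/16)*p^2) * hs1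
  have hX : x^2 = 400 - 20*q^2 + 40*b + b^2 := by rw [hx]; linear_combination (1*w3^2) * hw2 + (20 + (-1)*g2^2) * hw3 + ((-20)*g2 + 1*g2*g3^2 + 10*s2 + (-1/2)*s2*g3^2 + (-10)*q + (1/2)*q*g3^2) * hg2 + ((-20)*g3 + (-10)*s2 + (1/4)*s2^2*g3 + (1/8)*s2^3 + (-10)*q + (-1/2)*q*s2*g3 + (-1/8)*q*s2^2 + (1/4)*q^2*g3 + (-1/8)*q^2*s2 + (1/8)*q^3) * hg3 + ((-10) + (1/16)*s2^2 + (-1/4)*b + (-1/16)*q^2) * hs2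
  have hUV : (400 - 20*p^2 + 40*a + a^2) * (400 - 20*q^2 + 40*b + b^2) = 5776 :=
    mul_right_cancel₀ (pow_ne_zero 4 hr0.ne') (by linear_combination ((-4400)*r^2 + (-440)*r^2*b + (-11)*r^2*b^2 + 220*r^2*q^2 + 7200*r^2*p + 720*r^2*p*b + 18*r^2*p*b^2 + (-360)*r^2*p*q^2 + 16000*r^3 + 1600*r^3*b + 40*r^3*b^2 + 400*r^3*a + 40*r^3*a*b + 1*r^3*a*b^2 + (-800)*r^3*q^2 + (-20)*r^3*q^2*a + 400*t*r^2*p + 40*t*r^2*p*b + 1*t*r^2*p*b^2 + (-20)*t*r^2*p*q^2) * har + (1331 + (-2178)*q + (-4356)*p + 7128*p*q + 3564*p^2 + (-5832)*p^2*q + 121*r*b + 7920*r*q + (-7920)*r*p + (-396)*r*p*b + (-12960)*r*p*q + 12960*r*p^2 + 324*r*p^2*b + (-13200)*r^2 + (-440)*r^2*b + (-7200)*r^2*q + 28800*r^2*p + 720*r^2*p*b + (-220)*r^2*p^2 + 360*r^2*p^2*q + 16000*r^3 + 400*r^3*b + (-800)*r^3*p^2 + (-20)*r^3*p^2*b + (-121)*t*q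 + (-242)*t*p + 792*t*p*q + 396*t*p^2 + (-972)*t*p^2*q + 440*t*r*q + (-440)*t*r*p + (-22)*t*r*p*b + (-1440)*t*r*p*q + 1440*t*r*p^2 + 36*t*r*p^2*b + (-400)*t*r^2*q + 1600*t*r^2*p + 40*t*r^2*p*b + 20*t*r^2*p^2*q + 22*t^2*p*q + 11*t^2*p^2 + (-54)*t^2*p^2*q + (-40)*t^2*r*p*q + 40*t^2*r*p^2 + 1*t^2*r*p^2*b + (-1)*t^3*p^2*q) * hbr + ((-28314) + 92664*q + (-75816)*q^2 + 39204*p + (-128304)*p*q + 104976*p*q^2 + (-35442)*r + (-52488)*r*q + 180792*r*q^2 + 142560*r*p + (-233280)*r*p*q + 150710*r^2 + (-397800)*r^2*q + 1440*r^2*q^2 + 127180*r^2*p + 7920*r^2*p*q + (-12960)*r^2*p*q^2 + 220010*r^3 + 3240*r^3*q + (-7920)*r^3*q^2 + (-8800)*r^3*p + 14400*r^3*p*q + 400*r^4 + (-7200)*r^4*q + 200*r^4*q^2 + (-8000)*r^4*p + 400*r^4*p*q^2 + 4000*r^5 + (-200)*r^5*q^2 + (-484)*t + 6732*t*q + (-9720)*t*q^2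 + 4356*t*p + (-21384)*t*p*q + 23328*t*p*q^2 + 902*t*r + (-8748)*t*r*q + 27216*t*r*q^2 + 15840*t*r*p + (-38880)*t*r*p*q + 8080*t*r^2 + (-37940)*t*r^2*q + (-280)*t*r^2*q^2 + 14400*t*r^2*p + 440*t*r^2*p*q + (-1440)*t*r^2*p*q^2 + 8800*t*r^3 + 180*t*r^3*q + (-80)*t*r^3*q^2 + 800*t*r^3*p*q + (-400)*t*r^4*q + (121/2)*t^2 + (-110)*t^2*q + (-216)*t^2*q^2 + 121*t^2*p + (-1188)*t^2*p*q + 1944*t^2*p*q^2 + (319/2)*t^2*r + (-486)*t^2*r*q + 1188*t^2*r*q^2 + 440*t^2*r*p + (-2160)*t^2*r*p*q + (-20)*t^2*r^2 + (-520)*t^2*r^2*q + (-20)*t^2*r^2*q^2 + 400*t^2*r^2*p + (-40)*t^2*r^2*p*q^2 + (-200)*t^2*r^3 + 20*t^2*r^3*q^2 + (-11)*t^3*q + 14*t^3*q^2 + (-22)*t^3*p*q + 72*t^3*p*q^2 + (-9)*t^3*r*q + 4*t^3*r*q^2 + (-40)*t^3*r*p*q + 20*t^3*r^2*q + (1/2)*t^4*q^2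 + 1*t^4*p*q^2 + (-1/2)*t^4*r*q^2) * hp + ((-936) + 1296*q + 8064*r + (-14256)*r*q + (-2632)*r^2 + 37504*r^2*q + (-66668)*r^3 + 4120*r^3*q + (-5130)*r^4 + (-3940)*r^4*q + 1530*r^5 + (-200)*r^5*q + (-50)*r^6 + 100*r^6*q + 50*r^7 + 452*t + (-504)*t*q + (-1838)*t*r + 2628*t*r*q + (-4156)*t*r^2 + 652*t*r^2*q + 3436*t*r^3 + 100*t*r^3*q + (-220)*t*r^4 + 40*t*r^4*q + 220*t*r^5 + (-97/2)*t^2 + 13*t^2*q + (-101/2)*t^2*r + 262*t^2*r*q + 12*t^2*r^2 + (-204)*t^2*r^2*q + 168*t^2*r^3 + 20*t^2*r^3*q + 5*t^2*r^4 + (-10)*t^2*r^4*q + (-5)*t^2*r^5 + (-2)*t^3 + 7*t^3*q + 2*t^3*r + (-5)*t^3*r*q + 11*t^3*r^2 + (-2)*t^3*r^2*q + (-11)*t^3*r^3 + (1/8)*t^4 + (1/4)*t^4*q + (-1/8)*t^4*r + (-1/2)*t^4*r*q + (-1/8)*t^4*r^2 + (1/4)*t^4*r^2*q + (1/8)*t^4*r^3)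 * hq + (6277 + 7285*r^2 + (-1235)*r^4 + 25*r^6 + (-26390)*t + 2158*t*r^2 + 10*t*r^4 + (-8597)*t^2 + 144*t^2*r^2 + (-5/2)*t^2*r^4 + (-565)*t^3 + (9/2)*t^3*r^2 + (-289/16)*t^4 + (1/16)*t^4*r^2 + (-1/4)*t^5) * hr2 + ((-203) + 817*t + 36*t^2 + 1*t^3) * hc)
  have hab2 : (a - b)^2 = (400 - 20*p^2 + 40*a + a^2) + (400 - 20*q^2 + 40*b + b^2) - 152 :=
    mul_right_cancel₀ (pow_ne_zero 2 hr0.ne') (by linear_combination ((-40)*r + (-2)*r*b) * har + (22 + (-36)*p + (-40)*r + (-2)*t*p) * hbr + ((-396) + 648*q + (-720)*r + 10*r^2 + 20*r^2*p + (-10)*r^3 + (-22)*t + 72*t*q + (-40)*t*r + 2*t^2*q) * hp + ((-72) + 396*r + 10*r^2 + 20*r^2*q + 10*r^3 + 14*t + 4*t*r + 1*t^2 + (-1)*t^2*r) * hq + ((-70) + 10*r^2 + (-18)*t + (-1/2)*t^2) * hr2 + (2) * hc)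
  have hK2 : (20*(p-q) - 40*(a-b) - 2*(a-b)*(a+b) + 2*a*(a-b))^2
      = 4*(a-b)^2*(400 - 20*q^2 + 40*b + b^2) :=
    mul_right_cancel₀ (pow_ne_zero 4 hr0.ne') (by linear_combination ((-880)*r^2*q^2 + 1440*r^2*p*q^2 + 1600*r^3*q + 80*r^3*q*b + (-160)*r^3*q^2*b + 80*r^3*q^2*a + (-1600)*r^3*p + (-80)*r^3*p*b + 80*t*r^2*p*q^2) * har + ((-1760)*r^2*q + 4080*r^2*q^2 + (-1440)*r^2*q^3 + 1760*r^2*p + (-2880)*r^2*p*q^2 + (-1440)*r^2*p^2 + (-1600)*r^3*q + (-80)*r^3*q*b + 80*r^3*q^2*b + 1600*r^3*p + 80*r^3*p*b + 80*t*r^2*q^2 + (-80)*t*r^2*q^3 + (-160)*t*r^2*p*q^2 + (-80)*t*r^2*p^2) * hbr + (11440*r^2 + (-18720)*r^2*q + (-50400)*r^2*q^2 + 51840*r^2*q^3 + (-15840)*r^2*p + 25920*r^2*p*q + 25920*r^2*p*q^2 + 28720*r^3 + (-12960)*r^3*q + (-12960)*r^3*q^2 + (-28800)*r^3*p + 14600*r^4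 + (-800)*r^4*q + 400*r^4*p + (-200)*r^5 + (-440)*t*r^2 + (-320)*t*r^2*q + (-2080)*t*r^2*q^2 + 5760*t*r^2*q^3 + (-880)*t*r^2*p + 2880*t*r^2*p*q + 2880*t*r^2*p*q^2 + (-360)*t*r^3 + (-1440)*t*r^3*q + (-1440)*t*r^3*q^2 + (-1600)*t*r^3*p + 800*t*r^4 + 40*t^2*r^2*q + 40*t^2*r^2*q^2 + 160*t^2*r^2*q^3 + 80*t^2*r^2*p*q + 80*t^2*r^2*p*q^2 + (-40)*t^2*r^3*q + (-40)*t^2*r^3*q^2) * hp + ((-10800)*r^2 + 35840*r^2*q + (-50400)*r^2*q^2 + 25920*r^2*q^3 + (-6480)*r^3 + 15840*r^3*q + (-12960)*r^3*q^2 + 14200*r^4 + 400*r^4*q + 600*r^5 + 120*t*r^2 + 560*t*r^2*q + (-2080)*t*r^2*q^2 + 2880*t*r^2*q^3 + (-200)*t*r^3 + 160*t*r^3*q + (-1440)*t*r^3*q^2 + 800*t*r^4 + 40*t^2*r^2 + 40*t^2*r^2*q + 40*t^2*r^2*q^2 + 80*t^2*r^2*q^3 + (-40)*t^2*r^3 +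 (-40)*t^2*r^3*q + (-40)*t^2*r^3*q^2) * hq + ((-2480) + (-2800)*r^2 + 400*r^4 + 10320*t + (-720)*t*r^2 + 2880*t^2 + (-20)*t^2*r^2 + 80*t^3) * hr2 + (80 + (-320)*t) * hc)
  -- x * y = 76
  have h76 : (x*y)^2 = 5776 := by
    linear_combination y^2 * hX + (400 - 20*q^2 + 40*b + b^2) * hY + hUV
  have hxy : x * y = 76 := by
    rcases mul_eq_zero.mp (show (x*y - 76)*(x*y + 76) = 0 by linear_combination h76) with h | h
    · linarith
    · exfalso; linarith [mul_pos hx0 hy0]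
  -- y - x = a - b
  have hsq : (y - x)^2 = (a - b)^2 := by
    linear_combination hY + hX - 2*hxy - hab2
  have hyltx : y < x := by
    rw [hy, hx]; exact y_lt_x hw1l hw1u hw2l hw2u hw3l hw3u hw4l hw4u
  have hyx : y - x = a - b := by
    rcases mul_eq_zero.mp (show ((y-x) - (a-b))*((y-x) + (a-b)) = 0 by linear_combination hsq)
      with h | h
    · linarith
    · exfalso; linarith
  -- K + 2(a-b)x = 0
  have hKpos : (0:ℝ) ≤ 20*(p-q) - 40*(a-b) - 2*(a-b)*(a+b) + 2*a*(a-b) := by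
    have hpq : p - q = -r := by rw [hp, hq]; ring
    rw [hpq]; exact K_nonneg hrl hru hal hau hbl hbu
  have hfac : (2*(a-b)*x + (20*(p-q) - 40*(a-b) - 2*(a-b)*(a+b) + 2*a*(a-b)))
      * (2*(a-b)*x - (20*(p-q) - 40*(a-b) - 2*(a-b)*(a+b) + 2*a*(a-b))) = 0 := by
    linear_combination (4*(a-b)^2) * hX - hK2
  have hx46 : 2*(a-b)*x + (20*(p-q) - 40*(a-b) - 2*(a-b)*(a+b) + 2*a*(a-b)) = 0 := by
    rcases mul_eq_zero.mp hfac with h | h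
    · exact h
    · exfalso
      have hba : (0:ℝ) < b - a := by linarith
      linarith [mul_pos hba hx0]
  -- imaginary parts of the two products agree
  have hL2 : (g1*w4 + g4*w1)^2 = 20*(p^2 - 2*a) - 2*a^2 + 2*a*y := by
    rw [hy]; linear_combination (1*g4^2) * hw1 + (1*g1^2) * hw4 + (2*g4*w1*w4 + 20*g1 + (-2)*g1*g4^2 + (-10)*s1 + 1*s1*g4^2 + 10*p + (-1)*p*g4^2) * hg1 + (20*g4 + 10*s1 + (-1)*s1*w1*w4 + (-1/2)*s1^2*g4 + (-1/4)*s1^3 + 10*p + 1*p*w1*w4 + 1*p*s1*g4 + (1/4)*p*s1^2 + (-1/2)*p^2*g4 + (1/4)*p^2*s1 + (-1/4)*p^3) * hg4 + (10 + (-1/2)*w1*w4 + (-1/8)*s1^2 + (1/2)*a + (1/8)*p^2) * hs1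
  have hR2 : (g2*w3 + g3*w2)^2 = 20*(q^2 - 2*b) - 2*b^2 + 2*b*x := by
    rw [hx]; linear_combination (1*g3^2) * hw2 + (1*g2^2) * hw3 + (2*g3*w2*w3 + 20*g2 + (-2)*g2*g3^2 + (-10)*s2 + 1*s2*g3^2 + 10*q + (-1)*q*g3^2) * hg2 + (20*g3 + 10*s2 + (-1)*s2*w2*w3 + (-1/2)*s2^2*g3 + (-1/4)*s2^3 + 10*q + 1*q*w2*w3 + 1*q*s2*g3 + (1/4)*q*s2^2 + (-1/2)*q^2*g3 + (1/4)*q^2*s2 + (-1/4)*q^3) * hg3 + (10 + (-1/2)*w2*w3 + (-1/8)*s2^2 + (1/2)*b + (1/8)*q^2) * hs2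
  have hLR2 : (g1*w4 + g4*w1)^2 = (g2*w3 + g3*w2)^2 := by
    linear_combination hL2 - hR2 + (2*a) * hyx + hx46 + (20*(p-q)) * hp + (20*(p-q)) * hq
  have hLpos : 0 < g1*w4 + g4*w1 := pos_comb hg1l hg1u hg4l hg4u hw1l hw1u hw4l hw4u
  have hRpos : 0 < g2*w3 + g3*w2 := pos_comb' hg2l hg2u hg3l hg3u hw2l hw2u hw3l hw3u
  have hLR : g1*w4 + g4*w1 = g2*w3 + g3*w2 := by
    rcases mul_eq_zero.mp (show ((g1*w4 + g4*w1) - (g2*w3 + g3*w2))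
        * ((g1*w4 + g4*w1) + (g2*w3 + g3*w2)) = 0 by linear_combination hLR2) with h | h
    · linarith
    · exfalso; linarith
  -- real parts of the two products agree
  have hRe : g1*g4 - w1*w4 = g2*g3 - w2*w3 := by
    linear_combination hA14 - hB23 + hy - hx - hyx
  -- assemble the four complex roots
  refine ⟨Complex.mk (g1/2) (w1/2), Complex.mk (g2/2) (w2/2),
    Complex.mk (g3/2) (w3/2), Complex.mk (g4/2) (w4/2),
    aux_root g1 w1 hw1 hγ1, aux_root g2 w2 hw2 hγ2,
    aux_root g3 w3 hw3 hγ3, aux_root g4 w4 hw4 hγ4,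
    ?_, ?_, ?_, ?_, ?_, ?_, ?_, ?_, ?_, ?_, ?_⟩
  · exact fun h => absurd (congrArg Complex.re h) (by show g1/2 ≠ g2/2; intro h'; linarith)
  · exact fun h => absurd (congrArg Complex.re h) (by show g1/2 ≠ g3/2; intro h'; linarith)
  · exact fun h => absurd (congrArg Complex.re h) (by show g1/2 ≠ g4/2; intro h'; linarith)
  · exact fun h => absurd (congrArg Complex.re h) (by show g2/2 ≠ g3/2; intro h'; linarith)
  · exact fun h => absurd (congrArg Complex.re h) (by show g2/2 ≠ g4/2; intro h'; linarith)
  · exact fun h => absurd (congrArg Complex.re h) (by show g3/2 ≠ g4/2; intro h'; linarith)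
  · show (0:ℝ) < w1/2; linarith
  · show (0:ℝ) < w2/2; linarith
  · show (0:ℝ) < w3/2; linarith
  · show (0:ℝ) < w4/2; linarith
  · apply Complex.ext
    · simp only [Complex.mul_re]
      show g1/2 * (g4/2) - w1/2 * (w4/2) = g2/2 * (g3/2) - w2/2 * (w3/2)
      linear_combination (1/4 : ℝ) * hRe
    · simp only [Complex.mul_im]
      show g1/2 * (w4/2) + w1/2 * (g4/2) = g2/2 * (w3/2) + w2/2 * (g3/2)
      linear_combination (1/4 : ℝ) * hLR
end

section
/- Let S = {arg(α) : α ∈ ℂ, P₅(α) = 0} be the set of principal arguments of the complex roots of P₅(T) = T⁸ − T⁷ + 2T⁶ − 4T⁵ + 16T⁴ − 20T³ + 50T² − 125T + 625. Then the ℚ-vector subspace of ℝ spanned by S ∪ {π} has dimension at most 4. (Equivalently, the angle rank of the corresponding isogeny class 4.5.ab_c_ae_q is at most 3, so it is not maximal.) -/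
open Polynomial

theorem P5aux_cube_key (u v s t : ℝ)
    (hu : u^4 - u^3 - 18*u^2 + 11*u + 46 = 0)
    (hv : v^4 - v^3 - 18*v^2 + 11*v + 46 = 0)
    (huv : u ≠ v)
    (hs : s^2 = 20 - u^2) (ht : t^2 = 20 - v^2) :
    ((-(u*v + s*t)/2)^3 - (-(u*v + s*t)/2)^2 - 80*(-(u*v + s*t)/2) - 75) *
    ((-(u*v - s*t)/2)^3 - (-(u*v - s*t)/2)^2 - 80*(-(u*v - s*t)/2) - 75) = 0 := by
  have h2 : v^3 + v^2*(u-1) + v*(u^2-u-18) + (u^3-u^2-18*u+11) = 0 := by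
    have hd : u - v ≠ 0 := sub_ne_zero.mpr huv
    have h0 : (u - v) * (v^3 + v^2*(u-1) + v*(u^2-u-18) + (u^3-u^2-18*u+11)) = 0 := by
      linear_combination hu - hv
    exact (mul_eq_zero.mp h0).resolve_left hd
  have hw : (s*t)^2 = (20 - u^2) * (20 - v^2) := by rw [mul_pow, hs, ht]
  linear_combination
    ((-75/2) + (61/16)*(s*t)^2 + (-1/64)*(s*t)^4 + (195/4)*v^2 + (5/16)*v^2*(s*t)^2
      + (-25/4)*v^4 + (405/4)*u*v + (1/16)*u*v*(s*t)^2 + (-5/4)*u*v^3 + (195/4)*u^2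
      + (5/16)*u^2*(s*t)^2 + (59/16)*u^2*v^2 + (1/32)*u^2*v^2*(s*t)^2 + (-5/16)*u^2*v^4
      + (-5/4)*u^3*v + (-1/16)*u^3*v^3 + (-25/4)*u^4 + (-5/16)*u^4*v^2
      + (-1/64)*u^4*v^4) * hw
    + ((-150) + 175*v + (-25)*v^2 + 175*u + (-75)*u*v + (-25)*u^2) * hu
    + ((-225) + (-1100)*v + 125*v^2 + 125*v^3 + (-950)*u + (-100)*u*v + (-100)*u*v^2
      + (-50)*u^2 + (-50)*u^2*v + 150*u^3) * h2

/-- Four ordered roots of the quartic determine its elementary symmetric functions. -/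

theorem P5aux_cubic_unique (x y : ℝ)
    (hx : x^3 - x^2 - 80*x - 75 = 0) (hy : y^3 - y^2 - 80*y - 75 = 0)
    (hxp : 0 < x) (hyp : 0 < y) : x = y := by
  by_contra hne
  have hcont : Continuous fun t : ℝ => t^3 - t^2 - 80*t - 75 := by continuity
  obtain ⟨ta, htaI, hta0⟩ :=
    (intermediate_value_Icc (by norm_num : (-8:ℝ) ≤ -7) hcont.continuousOn)
      (by norm_num : (0:ℝ) ∈ Set.Icc ((-8:ℝ)^3 - (-8:ℝ)^2 - 80*(-8) - 75)
        ((-7:ℝ)^3 - (-7:ℝ)^2 - 80*(-7) - 75))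
  obtain ⟨tb, htbI, htb0⟩ :=
    (intermediate_value_Icc' (by norm_num : (-1:ℝ) ≤ 0) hcont.continuousOn)
      (by norm_num : (0:ℝ) ∈ Set.Icc ((0:ℝ)^3 - (0:ℝ)^2 - 80*0 - 75)
        ((-1:ℝ)^3 - (-1:ℝ)^2 - 80*(-1) - 75))
  have hta : ta^3 - ta^2 - 80*ta - 75 = 0 := hta0
  have htb : tb^3 - tb^2 - 80*tb - 75 = 0 := htb0
  obtain ⟨hta1, hta2⟩ := htaI
  obtain ⟨htb1, htb2⟩ := htbI
  set p : ℝ[X] := X^3 - X^2 - C 80 * X - C 75 with hp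
  have heval : ∀ i ∈ ({ta, tb, x, y} : Finset ℝ), p.eval i = 0 := by
    intro i hi
    simp only [Finset.mem_insert, Finset.mem_singleton] at hi
    have : p.eval i = i^3 - i^2 - 80*i - 75 := by
      simp [hp]
    rw [this]
    rcases hi with rfl | rfl | rfl | rfl
    exacts [hta, htb, hx, hy]
  have hcard : ({ta, tb, x, y} : Finset ℝ).card = 4 := by
    rw [Finset.card_insert_of_notMem (by simp; refine ⟨by linarith, by linarith, by linarith⟩),
      Finset.card_insert_of_notMem (by simp; exact ⟨by linarith, by linarith⟩),
      Finset.card_insert_of_notMem (by simpa using hne), Finset.card_singleton]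
  have hp0 : p = 0 := by
    apply Polynomial.eq_zero_of_natDegree_lt_card_of_eval_eq_zero' p _ heval
    rw [hcard]
    have : p.natDegree ≤ 3 := by rw [hp]; compute_degree
    omega
  have := congrArg (Polynomial.eval 0) hp0
  simp [hp] at this

/-- Quadratic root decomposition. -/

theorem P5aux_esym (u₁ u₂ u₃ u₄ : ℝ)
    (h1 : u₁^4 - u₁^3 - 18*u₁^2 + 11*u₁ + 46 = 0)
    (h2 : u₂^4 - u₂^3 - 18*u₂^2 + 11*u₂ + 46 = 0)
    (h3 : u₃^4 - u₃^3 - 18*u₃^2 + 11*u₃ + 46 = 0)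
    (h4 : u₄^4 - u₄^3 - 18*u₄^2 + 11*u₄ + 46 = 0)
    (o12 : u₁ < u₂) (o23 : u₂ < u₃) (o34 : u₃ < u₄) :
    u₁ + u₂ + u₃ + u₄ = 1 ∧
    u₁*u₂ + u₁*u₃ + u₁*u₄ + u₂*u₃ + u₂*u₄ + u₃*u₄ = -18 ∧
    u₁*u₂*u₃ + u₁*u₂*u₄ + u₁*u₃*u₄ + u₂*u₃*u₄ = -11 ∧
    u₁*u₂*u₃*u₄ = 46 := by
  set A := u₁ + u₂ + u₃ + u₄ - 1 with hA
  set B := -18 - (u₁*u₂ + u₁*u₃ + u₁*u₄ + u₂*u₃ + u₂*u₄ + u₃*u₄) with hB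
  set E := 11 + (u₁*u₂*u₃ + u₁*u₂*u₄ + u₁*u₃*u₄ + u₂*u₃*u₄) with hE
  set F := 46 - u₁*u₂*u₃*u₄ with hF
  set p : ℝ[X] := C A * X^3 + C B * X^2 + C E * X + C F with hp
  have heval : ∀ i ∈ ({u₁, u₂, u₃, u₄} : Finset ℝ), p.eval i = 0 := by
    intro i hi
    simp only [Finset.mem_insert, Finset.mem_singleton] at hi
    rcases hi with rfl | rfl | rfl | rfl <;>
      simp only [hp, eval_add, eval_mul, eval_pow, eval_C, eval_X, hA, hB, hE, hF]
    · linear_combination h1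
    · linear_combination h2
    · linear_combination h3
    · linear_combination h4
  have hcard : ({u₁, u₂, u₃, u₄} : Finset ℝ).card = 4 := by
    rw [Finset.card_insert_of_notMem (by simp; refine ⟨by linarith, by linarith, by linarith⟩),
      Finset.card_insert_of_notMem (by simp; exact ⟨by linarith, by linarith⟩),
      Finset.card_insert_of_notMem (by simp; linarith), Finset.card_singleton]
  have hdeg : p.natDegree < 4 := by
    have : p.natDegree ≤ 3 := by rw [hp]; compute_degree
    omega
  have hp0 : p = 0 := by
    apply Polynomial.eq_zero_of_natDegree_lt_card_of_eval_eq_zero' p _ heval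
    rw [hcard]; exact hdeg
  have e0 := congrArg (Polynomial.eval 0) hp0
  have e1 := congrArg (Polynomial.eval 1) hp0
  have e2 := congrArg (Polynomial.eval (-1)) hp0
  have e3 := congrArg (Polynomial.eval 2) hp0
  simp only [hp, eval_add, eval_mul, eval_pow, eval_C, eval_X, eval_zero] at e0 e1 e2 e3
  norm_num at e0 e1 e2 e3
  simp only [hA, hB, hE, hF] at e0 e1 e2 e3
  exact ⟨by linarith, by linarith, by linarith, by linarith⟩

/-- The cubic `x³ - x² - 80x - 75` has a unique positive root. -/

theorem P5aux_sqb (u s a b : ℝ) (hs : s^2 = 20 - u^2) (h0 : 0 ≤ s)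
    (ha : 0 ≤ a) (hlu : a*a ≤ 20 - u^2) (huu : 20 - u^2 ≤ b*b) (hb : 0 ≤ b) :
    a ≤ s ∧ s ≤ b := by
  constructor
  · nlinarith only [hs, h0, ha, hlu]
  · nlinarith only [hs, h0, hb, huu]

theorem P5aux_c_neg (x : ℝ) (h1 : 26/10 ≤ x) (h2 : x ≤ 894/100) :
    x^3 - x^2 - 80*x - 75 < 0 := by
  nlinarith [mul_nonneg (mul_nonneg (by linarith : (0:ℝ) ≤ x) (by linarith : (0:ℝ) ≤ 9 - x))
    (by linarith : (0:ℝ) ≤ 9 + x)]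

theorem P5aux_c_pos (y : ℝ) (h1 : -(772/100) ≤ y) (h2 : y ≤ -(36/10)) :
    0 < y^3 - y^2 - 80*y - 75 := by
  nlinarith [mul_nonneg (by linarith : (0:ℝ) ≤ y + 772/100) (sq_nonneg y),
    mul_nonneg (by linarith : (0:ℝ) ≤ y + 772/100) (by linarith : (0:ℝ) ≤ -(36/10) - y)]

theorem P5aux_bnd14 (u₁ u₄ s₁ s₄ : ℝ)
    (h₁l : -4 ≤ u₁) (h₁r : u₁ ≤ -3) (h₄l : 4 < u₄) (h₄r : u₄ ≤ 447/100)
    (hs₁l : 2 ≤ s₁) (hs₁u : s₁ ≤ 17/5) (hs₄0 : 0 ≤ s₄) (hs₄u : s₄ ≤ 2) :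
    26/10 ≤ -(u₁*u₄ + s₁*s₄)/2 ∧ -(u₁*u₄ + s₁*s₄)/2 ≤ 894/100 ∧
    0 < -(u₁*u₄ - s₁*s₄)/2 := by
  have p1 : (0:ℝ) ≤ (-3 - u₁) * (u₄ - 4) := mul_nonneg (by linarith) (by linarith)
  have p2 : (0:ℝ) ≤ (u₁ + 4) * (447/100 - u₄) := mul_nonneg (by linarith) (by linarith)
  have p3 : (0:ℝ) ≤ (17/5 - s₁) * (2 - s₄) := mul_nonneg (by linarith) (by linarith)
  have p4 : (0:ℝ) ≤ s₁ * s₄ := mul_nonneg (by linarith) hs₄0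
  refine ⟨by nlinarith, by nlinarith, by nlinarith⟩

theorem P5aux_bnd23 (u₂ u₃ s₂ s₃ : ℝ)
    (h₂l : -2 ≤ u₂) (h₂r : u₂ ≤ -1) (h₃l : 2 < u₃) (h₃r : u₃ ≤ 3)
    (hs₂l : 4 ≤ s₂) (hs₂u : s₂ ≤ 109/25) (hs₃l : 33/10 ≤ s₃) (hs₃u : s₃ ≤ 4) :
    -(772/100) ≤ -(u₂*u₃ + s₂*s₃)/2 ∧ -(u₂*u₃ + s₂*s₃)/2 ≤ -(36/10) ∧
    0 < -(u₂*u₃ - s₂*s₃)/2 := by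
  have p1 : (0:ℝ) ≤ (u₂ + 2) * (3 - u₃) := mul_nonneg (by linarith) (by linarith)
  have p2 : (0:ℝ) ≤ (-1 - u₂) * (u₃ - 2) := mul_nonneg (by linarith) (by linarith)
  have p3 : (0:ℝ) ≤ (s₂ - 4) * (s₃ - 33/10) := mul_nonneg (by linarith) (by linarith)
  have p4 : (0:ℝ) ≤ (109/25 - s₂) * (4 - s₃) := mul_nonneg (by linarith) (by linarith)
  refine ⟨by nlinarith, by nlinarith, by nlinarith⟩

theorem P5aux_sin14 (u₁ u₄ s₁ s₄ : ℝ)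
    (h₁l : -4 ≤ u₁) (h₄l : 4 < u₄) (hs₁l : 2 ≤ s₁) (hs₄0 : 0 ≤ s₄) (hs₄u : s₄ ≤ 2) :
    0 < s₁*u₄ + u₁*s₄ := by
  have p1 : (0:ℝ) ≤ (s₁ - 2) * (u₄ - 4) := mul_nonneg (by linarith) (by linarith)
  have p2 : (0:ℝ) ≤ (u₁ + 4) * s₄ := mul_nonneg (by linarith) hs₄0
  nlinarith

theorem P5aux_sin23 (u₂ u₃ s₂ s₃ : ℝ)
    (h₂l : -2 ≤ u₂) (h₃l : 2 < u₃) (hs₂l : 4 ≤ s₂) (hs₃0 : 0 ≤ s₃) (hs₃u : s₃ ≤ 4) :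
    0 < s₂*u₃ + u₂*s₃ := by
  have p1 : (0:ℝ) ≤ (s₂ - 4) * (u₃ - 2) := mul_nonneg (by linarith) (by linarith)
  have p2 : (0:ℝ) ≤ (u₂ + 2) * s₃ := mul_nonneg (by linarith) hs₃0
  nlinarith

theorem P5aux_quad (u s : ℝ) (α : ℂ) (hs : s^2 = 20 - u^2)
    (hq : α^2 - (u:ℂ)*α + 5 = 0) :
    α = Complex.mk (u/2) (s/2) ∨ α = Complex.mk (u/2) (-(s/2)) := by
  have hz : (Complex.mk (u/2) (s/2) : ℂ) = (u/2 : ℝ) + (s/2 : ℝ) * Complex.I :=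
    Complex.mk_eq_add_mul_I _ _
  have hw : (Complex.mk (u/2) (-(s/2)) : ℂ) = (u/2 : ℝ) + (-(s/2) : ℝ) * Complex.I :=
    Complex.mk_eq_add_mul_I _ _
  have hsC : ((s:ℂ))^2 = 20 - ((u:ℂ))^2 := by exact_mod_cast congrArg (Complex.ofReal) hs
  have hI : (Complex.I)^2 = -1 := Complex.I_sq
  have hfac : (α - Complex.mk (u/2) (s/2)) * (α - Complex.mk (u/2) (-(s/2))) = 0 := by
    rw [hz, hw]
    push_cast
    linear_combination hq + (1/4 : ℂ) * hsC - ((s:ℂ)^2/4) * hI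
  rcases mul_eq_zero.mp hfac with h | h
  · exact Or.inl (sub_eq_zero.mp h)
  · exact Or.inr (sub_eq_zero.mp h)

/-- Facts about the argument of `(u + s i)/2` when `u² + s² = 20`, `s > 0`. -/

theorem P5aux_arg (u s : ℝ) (hs : s^2 = 20 - u^2) (hspos : 0 < s) :
    Real.cos (Complex.arg (Complex.mk (u/2) (s/2))) = u/2 / Real.sqrt 5 ∧
    0 < Complex.arg (Complex.mk (u/2) (s/2)) ∧
    Complex.arg (Complex.mk (u/2) (s/2)) < Real.pi ∧
    Complex.arg (Complex.mk (u/2) (-(s/2))) = - Complex.arg (Complex.mk (u/2) (s/2)) ∧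
    Real.sin (Complex.arg (Complex.mk (u/2) (s/2))) = s/2 / Real.sqrt 5 := by
  set z : ℂ := Complex.mk (u/2) (s/2) with hzdef
  have hnorm : Complex.normSq z = 5 := by
    rw [hzdef, Complex.normSq_mk]; nlinarith [hs]
  have habs : ‖z‖ = Real.sqrt 5 := by
    rw [Complex.norm_def, hnorm]
  have hz0 : z ≠ 0 := by
    intro h
    have h2 : z.im = 0 := by rw [h]; rfl
    rw [hzdef] at h2
    simp at h2
    linarith
  have hcos : Real.cos (Complex.arg z) = u/2 / Real.sqrt 5 := by
    rw [Complex.cos_arg hz0, habs]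
  have hsin : Real.sin (Complex.arg z) = s/2 / Real.sqrt 5 := by
    rw [Complex.sin_arg, habs]
  have hsqrt5 : 0 < Real.sqrt 5 := Real.sqrt_pos.mpr (by norm_num)
  have hsinpos : 0 < Real.sin (Complex.arg z) := by
    rw [hsin]; positivity
  have hargpos : 0 < Complex.arg z := by
    by_contra h
    push_neg at h
    have := Real.sin_nonpos_of_nonpos_of_neg_pi_le h (Complex.neg_pi_lt_arg z).le
    linarith
  have harglt : Complex.arg z < Real.pi := by
    rcases lt_or_eq_of_le (Complex.arg_le_pi z) with h | h
    · exact h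
    · exfalso; rw [h, Real.sin_pi] at hsinpos; linarith
  have hconj : (Complex.mk (u/2) (-(s/2)) : ℂ) = (starRingEnd ℂ) z := by
    rw [hzdef]; rfl
  have hargconj : Complex.arg (Complex.mk (u/2) (-(s/2))) = - Complex.arg z := by
    rw [hconj, Complex.arg_conj, if_neg (ne_of_lt harglt)]
  exact ⟨hcos, hargpos, harglt, hargconj, hsin⟩

/-- If `0 < X < 2π` and `sin X > 0` then `X < π`. -/

theorem P5aux_lt_pi (X : ℝ) (h2 : X < 2 * Real.pi) (hsin : 0 < Real.sin X) :
    X < Real.pi := by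
  by_contra h
  push_neg at h
  have h1 : 0 ≤ X - Real.pi := by linarith
  have h2' : X - Real.pi ≤ Real.pi := by linarith
  have := Real.sin_nonneg_of_nonneg_of_le_pi h1 h2'
  rw [Real.sin_sub_pi] at this
  linarith

set_option maxHeartbeats 1000000 in
/-- The `ℚ`-vector subspace of `ℝ` spanned by the principal arguments of the complex roots of
`P₅` together with `π` has dimension at most `4` (i.e., the angle rank of the isogeny class
`4.5.ab_c_ae_q` is at most `3`, hence not maximal). -/
theorem P5_angle_rank_le_three :
    Module.rank ℚ
      (Submodule.span ℚ ({x : ℝ | ∃ α : ℂ, P5.eval α = 0 ∧ Complex.arg α = x} ∪ {Real.pi}))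
      ≤ 4 := by
  -- the four real roots of the quartic x⁴ - x³ - 18x² + 11x + 46
  have hcont : Continuous fun x : ℝ => x^4 - x^3 - 18*x^2 + 11*x + 46 := by continuity
  obtain ⟨u₁, hu₁I, hu₁0⟩ :=
    (intermediate_value_Icc' (by norm_num : (-4:ℝ) ≤ -3) hcont.continuousOn)
      (by norm_num : (0:ℝ) ∈ Set.Icc ((-3:ℝ)^4 - (-3:ℝ)^3 - 18*(-3:ℝ)^2 + 11*(-3) + 46)
        ((-4:ℝ)^4 - (-4:ℝ)^3 - 18*(-4:ℝ)^2 + 11*(-4) + 46))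
  obtain ⟨u₂, hu₂I, hu₂0⟩ :=
    (intermediate_value_Icc (by norm_num : (-2:ℝ) ≤ -1) hcont.continuousOn)
      (by norm_num : (0:ℝ) ∈ Set.Icc ((-2:ℝ)^4 - (-2:ℝ)^3 - 18*(-2:ℝ)^2 + 11*(-2) + 46)
        ((-1:ℝ)^4 - (-1:ℝ)^3 - 18*(-1:ℝ)^2 + 11*(-1) + 46))
  obtain ⟨u₃, hu₃I, hu₃0⟩ :=
    (intermediate_value_Icc' (by norm_num : (2:ℝ) ≤ 3) hcont.continuousOn)
      (by norm_num : (0:ℝ) ∈ Set.Icc ((3:ℝ)^4 - (3:ℝ)^3 - 18*(3:ℝ)^2 + 11*3 + 46)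
        ((2:ℝ)^4 - (2:ℝ)^3 - 18*(2:ℝ)^2 + 11*2 + 46))
  obtain ⟨u₄, hu₄I, hu₄0⟩ :=
    (intermediate_value_Icc (by norm_num : (4:ℝ) ≤ 447/100) hcont.continuousOn)
      (by norm_num : (0:ℝ) ∈ Set.Icc ((4:ℝ)^4 - (4:ℝ)^3 - 18*(4:ℝ)^2 + 11*4 + 46)
        ((447/100:ℝ)^4 - (447/100:ℝ)^3 - 18*(447/100:ℝ)^2 + 11*(447/100) + 46))
  have hu₁ : u₁^4 - u₁^3 - 18*u₁^2 + 11*u₁ + 46 = 0 := hu₁0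
  have hu₂ : u₂^4 - u₂^3 - 18*u₂^2 + 11*u₂ + 46 = 0 := hu₂0
  have hu₃ : u₃^4 - u₃^3 - 18*u₃^2 + 11*u₃ + 46 = 0 := hu₃0
  have hu₄ : u₄^4 - u₄^3 - 18*u₄^2 + 11*u₄ + 46 = 0 := hu₄0
  obtain ⟨hu₁l, hu₁r⟩ := hu₁I
  obtain ⟨hu₂l, hu₂r⟩ := hu₂I
  obtain ⟨hu₃l, hu₃r⟩ := hu₃I
  obtain ⟨hu₄l, hu₄r⟩ := hu₄I
  have hu₃l' : 2 < u₃ := lt_of_le_of_ne hu₃l (by intro h; rw [← h] at hu₃; norm_num at hu₃)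
  have hu₄l' : 4 < u₄ := lt_of_le_of_ne hu₄l (by intro h; rw [← h] at hu₄; norm_num at hu₄)
  -- square roots s_j with s_j² = 20 - u_j²
  set s₁ := Real.sqrt (20 - u₁^2) with hs₁def
  set s₂ := Real.sqrt (20 - u₂^2) with hs₂def
  set s₃ := Real.sqrt (20 - u₃^2) with hs₃def
  set s₄ := Real.sqrt (20 - u₄^2) with hs₄def
  have hs₁ : s₁^2 = 20 - u₁^2 := Real.sq_sqrt (by nlinarith only [hu₁l, hu₁r])
  have hs₂ : s₂^2 = 20 - u₂^2 := Real.sq_sqrt (by nlinarith only [hu₂l, hu₂r])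
  have hs₃ : s₃^2 = 20 - u₃^2 := Real.sq_sqrt (by nlinarith only [hu₃l, hu₃r])
  have hs₄ : s₄^2 = 20 - u₄^2 := Real.sq_sqrt (by nlinarith only [hu₄l', hu₄r])
  have hs₁0 : 0 ≤ s₁ := Real.sqrt_nonneg _
  have hs₂0 : 0 ≤ s₂ := Real.sqrt_nonneg _
  have hs₃0 : 0 ≤ s₃ := Real.sqrt_nonneg _
  have hs₄0 : 0 ≤ s₄ := Real.sqrt_nonneg _
  have hs₁b : 2 ≤ s₁ ∧ s₁ ≤ 17/5 :=
    P5aux_sqb u₁ s₁ 2 (17/5) hs₁ hs₁0 (by norm_num)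
      (by nlinarith only [hu₁l, hu₁r]) (by nlinarith only [hu₁l, hu₁r]) (by norm_num)
  have hs₂b : 4 ≤ s₂ ∧ s₂ ≤ 109/25 :=
    P5aux_sqb u₂ s₂ 4 (109/25) hs₂ hs₂0 (by norm_num)
      (by nlinarith only [hu₂l, hu₂r]) (by nlinarith only [hu₂l, hu₂r]) (by norm_num)
  have hs₃b : 33/10 ≤ s₃ ∧ s₃ ≤ 4 :=
    P5aux_sqb u₃ s₃ (33/10) 4 hs₃ hs₃0 (by norm_num)
      (by nlinarith only [hu₃l', hu₃r]) (by nlinarith only [hu₃l', hu₃r]) (by norm_num)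
  have hs₄b : 1/10 ≤ s₄ ∧ s₄ ≤ 2 :=
    P5aux_sqb u₄ s₄ (1/10) 2 hs₄ hs₄0 (by norm_num)
      (by nlinarith only [hu₄l', hu₄r]) (by nlinarith only [hu₄l', hu₄r]) (by norm_num)
  have hs₁p : 0 < s₁ := lt_of_lt_of_le (by norm_num) hs₁b.1
  have hs₂p : 0 < s₂ := lt_of_lt_of_le (by norm_num) hs₂b.1
  have hs₃p : 0 < s₃ := lt_of_lt_of_le (by norm_num) hs₃b.1
  have hs₄p : 0 < s₄ := lt_of_lt_of_le (by norm_num) hs₄b.1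
  -- the cubic relation for the two pairs
  have k14 := P5aux_cube_key u₁ u₄ s₁ s₄ hu₁ hu₄ (by intro h; rw [h] at hu₁r; linarith) hs₁ hs₄
  have k23 := P5aux_cube_key u₂ u₃ s₂ s₃ hu₂ hu₃ (by intro h; rw [h] at hu₂r; linarith) hs₂ hs₃
  obtain ⟨b14l, b14r, b14p⟩ :=
    P5aux_bnd14 u₁ u₄ s₁ s₄ hu₁l hu₁r hu₄l' hu₄r hs₁b.1 hs₁b.2 hs₄0 hs₄b.2
  obtain ⟨b23l, b23r, b23p⟩ :=
    P5aux_bnd23 u₂ u₃ s₂ s₃ hu₂l hu₂r hu₃l' hu₃r hs₂b.1 hs₂b.2 hs₃b.1 hs₃b.2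
  have hw14 : (-(u₁*u₄ - s₁*s₄)/2)^3 - (-(u₁*u₄ - s₁*s₄)/2)^2
      - 80*(-(u₁*u₄ - s₁*s₄)/2) - 75 = 0 :=
    (mul_eq_zero.mp k14).resolve_left (ne_of_lt (P5aux_c_neg _ b14l b14r))
  have hw23 : (-(u₂*u₃ - s₂*s₃)/2)^3 - (-(u₂*u₃ - s₂*s₃)/2)^2
      - 80*(-(u₂*u₃ - s₂*s₃)/2) - 75 = 0 :=
    (mul_eq_zero.mp k23).resolve_left (ne_of_gt (P5aux_c_pos _ b23l b23r))
  have hE1 : u₁*u₄ - s₁*s₄ = u₂*u₃ - s₂*s₃ := by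
    have := P5aux_cubic_unique _ _ hw14 hw23 b14p b23p
    linarith
  -- symmetric functions of the u's
  obtain ⟨hS1, hS2, hS3, hS4⟩ :=
    P5aux_esym u₁ u₂ u₃ u₄ hu₁ hu₂ hu₃ hu₄ (by linarith) (by linarith) (by linarith)
  -- the four upper-half-plane roots and their arguments
  obtain ⟨hc₁, hp₁, hl₁, hj₁, hn₁⟩ := P5aux_arg u₁ s₁ hs₁ hs₁p
  obtain ⟨hc₂, hp₂, hl₂, hj₂, hn₂⟩ := P5aux_arg u₂ s₂ hs₂ hs₂p
  obtain ⟨hc₃, hp₃, hl₃, hj₃, hn₃⟩ := P5aux_arg u₃ s₃ hs₃ hs₃p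
  obtain ⟨hc₄, hp₄, hl₄, hj₄, hn₄⟩ := P5aux_arg u₄ s₄ hs₄ hs₄p
  set θ₁ := Complex.arg (Complex.mk (u₁/2) (s₁/2)) with hθ₁def
  set θ₂ := Complex.arg (Complex.mk (u₂/2) (s₂/2)) with hθ₂def
  set θ₃ := Complex.arg (Complex.mk (u₃/2) (s₃/2)) with hθ₃def
  set θ₄ := Complex.arg (Complex.mk (u₄/2) (s₄/2)) with hθ₄def
  -- the key angle relation θ₁ + θ₄ = θ₂ + θ₃
  have hsq5 : Real.sqrt 5 * Real.sqrt 5 = 5 := Real.mul_self_sqrt (by norm_num)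
  have hs5p : 0 < Real.sqrt 5 := Real.sqrt_pos.mpr (by norm_num)
  have hmul : ∀ a b : ℝ, (a/2/Real.sqrt 5) * (b/2/Real.sqrt 5) = a*b/20 := by
    intro a b
    rw [div_div, div_div, div_mul_div_comm]
    congr 1
    nlinarith only [hsq5]
  have hcos14 : Real.cos (θ₁ + θ₄) = (u₁*u₄ - s₁*s₄)/20 := by
    rw [Real.cos_add, hc₁, hc₄, hn₁, hn₄, hmul, hmul]
    ring
  have hcos23 : Real.cos (θ₂ + θ₃) = (u₂*u₃ - s₂*s₃)/20 := by
    rw [Real.cos_add, hc₂, hc₃, hn₂, hn₃, hmul, hmul]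
    ring
  have hsin14 : 0 < Real.sin (θ₁ + θ₄) := by
    rw [Real.sin_add, hc₁, hc₄, hn₁, hn₄, hmul, hmul]
    have := P5aux_sin14 u₁ u₄ s₁ s₄ hu₁l hu₄l' hs₁b.1 hs₄0 hs₄b.2
    linarith [div_pos this (by norm_num : (0:ℝ) < 20)]
  have hsin23 : 0 < Real.sin (θ₂ + θ₃) := by
    rw [Real.sin_add, hc₂, hc₃, hn₂, hn₃, hmul, hmul]
    have := P5aux_sin23 u₂ u₃ s₂ s₃ hu₂l hu₃l' hs₂b.1 hs₃0 hs₃b.2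
    linarith [div_pos this (by norm_num : (0:ℝ) < 20)]
  have hrel : θ₁ + θ₄ = θ₂ + θ₃ := by
    have h14lt : θ₁ + θ₄ < Real.pi := P5aux_lt_pi _ (by linarith) hsin14
    have h23lt : θ₂ + θ₃ < Real.pi := P5aux_lt_pi _ (by linarith) hsin23
    have hcc : Real.cos (θ₁ + θ₄) = Real.cos (θ₂ + θ₃) := by
      rw [hcos14, hcos23, hE1]
    exact Real.injOn_cos ⟨by linarith, h14lt.le⟩ ⟨by linarith, h23lt.le⟩ hcc
  -- spanning set
  set T : Set ℝ := {θ₁, θ₂, θ₃, Real.pi} with hT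
  have hm1 : θ₁ ∈ Submodule.span ℚ T := Submodule.subset_span (by simp [hT])
  have hm2 : θ₂ ∈ Submodule.span ℚ T := Submodule.subset_span (by simp [hT])
  have hm3 : θ₃ ∈ Submodule.span ℚ T := Submodule.subset_span (by simp [hT])
  have hmπ : Real.pi ∈ Submodule.span ℚ T := Submodule.subset_span (by simp [hT])
  have hm4 : θ₄ ∈ Submodule.span ℚ T := by
    have : θ₄ = θ₂ + θ₃ - θ₁ := by linarith
    rw [this]
    exact sub_mem (add_mem hm2 hm3) hm1
  -- every root of P5 has argument ±θⱼ
  have hroot : ∀ α : ℂ, P5.eval α = 0 → Complex.arg α ∈ Submodule.span ℚ T := by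
    intro α hα
    have hα' : α^8 - α^7 + 2*α^6 - 4*α^5 + 16*α^4 - 20*α^3 + 50*α^2 - 125*α + 625 = 0 := by
      have : P5.eval α = α^8 - α^7 + 2*α^6 - 4*α^5 + 16*α^4 - 20*α^3 + 50*α^2 - 125*α + 625 := by
        simp [P5]
      rw [this] at hα
      exact hα
    have hS1C : (u₁:ℂ) + u₂ + u₃ + u₄ = 1 := by exact_mod_cast congrArg Complex.ofReal hS1
    have hS2C : (u₁:ℂ)*u₂ + u₁*u₃ + u₁*u₄ + u₂*u₃ + u₂*u₄ + u₃*u₄ = -18 := by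
      exact_mod_cast congrArg Complex.ofReal hS2
    have hS3C : (u₁:ℂ)*u₂*u₃ + u₁*u₂*u₄ + u₁*u₃*u₄ + u₂*u₃*u₄ = -11 := by
      exact_mod_cast congrArg Complex.ofReal hS3
    have hS4C : (u₁:ℂ)*u₂*u₃*u₄ = 46 := by exact_mod_cast congrArg Complex.ofReal hS4
    have hprod : (α^2 - (u₁:ℂ)*α + 5) * ((α^2 - (u₂:ℂ)*α + 5) *
        ((α^2 - (u₃:ℂ)*α + 5) * (α^2 - (u₄:ℂ)*α + 5))) = 0 := by
      linear_combination hα' - α*(α^2+5)^3*hS1C + α^2*(α^2+5)^2*hS2C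
        - α^3*(α^2+5)*hS3C + α^4*hS4C
    rcases mul_eq_zero.mp hprod with h | h
    · rcases P5aux_quad u₁ s₁ α hs₁ h with h' | h'
      · rw [h']; exact hm1
      · rw [h', hj₁]; exact neg_mem hm1
    rcases mul_eq_zero.mp h with h | h
    · rcases P5aux_quad u₂ s₂ α hs₂ h with h' | h'
      · rw [h']; exact hm2
      · rw [h', hj₂]; exact neg_mem hm2
    rcases mul_eq_zero.mp h with h | h
    · rcases P5aux_quad u₃ s₃ α hs₃ h with h' | h'
      · rw [h']; exact hm3
      · rw [h', hj₃]; exact neg_mem hm3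
    · rcases P5aux_quad u₄ s₄ α hs₄ h with h' | h'
      · rw [h']; exact hm4
      · rw [h', hj₄]; exact neg_mem hm4
  -- conclude
  have hsub : ({x : ℝ | ∃ α : ℂ, P5.eval α = 0 ∧ Complex.arg α = x} ∪ {Real.pi})
      ⊆ (Submodule.span ℚ T : Submodule ℚ ℝ) := by
    rintro x (⟨α, hα, rfl⟩ | hx)
    · exact hroot α hα
    · rw [Set.mem_singleton_iff.mp hx]; exact hmπ
  have hle : Submodule.span ℚ ({x : ℝ | ∃ α : ℂ, P5.eval α = 0 ∧ Complex.arg α = x} ∪ {Real.pi})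
      ≤ Submodule.span ℚ T := Submodule.span_le.mpr hsub
  have hr1 := Submodule.rank_mono (M := ℝ) hle
  have hr2 : Module.rank ℚ (Submodule.span ℚ T) ≤ Cardinal.mk T := rank_span_le T
  have hr3 : Cardinal.mk T ≤ 4 := by
    rw [hT]
    refine le_trans Cardinal.mk_insert_le ?_
    refine le_trans (add_le_add_left Cardinal.mk_insert_le 1) ?_
    refine le_trans (add_le_add_left (add_le_add_left Cardinal.mk_insert_le 1) 1) ?_
    rw [Cardinal.mk_singleton]
    norm_num
  exact hr1.trans (hr2.trans hr3)
end

section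
/- Let q be a positive real number, m and s positive integers with s ≤ m, and β₁, …, β_m nonzero complex numbers. Suppose v₁, …, v_s ∈ ℤ^m are linearly independent over ℚ and that for each k = 1, …, s there is an integer d_k with β₁^{v_k(1)} · β₂^{v_k(2)} ⋯ β_m^{v_k(m)} · (−q)^{d_k} = 1 (integer exponents, allowing negative powers). Then the ℚ-vector subspace of ℝ spanned by {arg(β₁), …, arg(β_m)} ∪ {π} has dimension at most m + 1 − s. -/
open Complex in
lemma arg_relation (q : ℝ) (hq : 0 < q) {m : ℕ} (β : Fin m → ℂ) (hβ : ∀ i, β i ≠ 0)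
    (u : Fin m → ℤ) (d : ℤ) (h : (∏ i : Fin m, β i ^ (u i)) * (-(q : ℂ)) ^ d = 1) :
    ∃ n : ℤ, ∑ i : Fin m, (u i : ℝ) * Complex.arg (β i) + ((d : ℝ) - 2 * n) * Real.pi = 0 := by
  have hnq : (-(q : ℂ)) ≠ 0 := by
    simp [Complex.ext_iff, ne_of_gt hq]
  have key : Complex.exp (∑ i : Fin m, (u i : ℂ) * Complex.log (β i)
      + (d : ℂ) * Complex.log (-(q : ℂ))) = 1 := by
    rw [Complex.exp_add, Complex.exp_sum]
    rw [← h]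
    congr 1
    · exact Finset.prod_congr rfl fun i _ => by
        rw [Complex.exp_int_mul, Complex.exp_log (hβ i)]
    · rw [Complex.exp_int_mul, Complex.exp_log hnq]
  rw [Complex.exp_eq_one_iff] at key
  obtain ⟨n, hn⟩ := key
  refine ⟨n, ?_⟩
  have him := congrArg Complex.im hn
  have harg : (Complex.log (-(q : ℂ))).im = Real.pi := by
    rw [Complex.log_im]
    have : (-(q : ℂ)) = ((-q : ℝ) : ℂ) := by push_cast; ring
    rw [this, Complex.arg_ofReal_of_neg (by linarith)]
  have harg2 : (-(q : ℂ)).arg = Real.pi := by rwa [Complex.log_im] at harg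
  simp only [Complex.add_im, Complex.im_sum, Complex.mul_im, Complex.intCast_im,
    Complex.intCast_re, Complex.log_im, zero_mul, add_zero, harg2, Complex.mul_re,
    Complex.ofReal_im, Complex.ofReal_re, Complex.re_ofNat, Complex.im_ofNat,
    Complex.I_re, Complex.I_im, mul_zero, mul_one, zero_add, sub_zero, zero_sub,
    zero_mul, neg_zero] at him
  nlinarith [him]

/-- Certification principle for angle-rank upper bounds: if `β₁, …, β_m` are nonzero complex
numbers and `v₁, …, v_s ∈ ℤ^m` are `ℚ`-linearly independent integer vectors such that for each
`k` there is an integer `d_k` with `∏ i, β i ^ (v k i) * (−q) ^ d_k = 1`, then the `ℚ`-span in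
`ℝ` of the arguments `arg β₁, …, arg β_m` together with `π` has dimension at most `m + 1 − s`. -/
theorem angle_rank_certificate (q : ℝ) (hq : 0 < q) (m s : ℕ) (hm : 0 < m) (hs : 0 < s)
    (hsm : s ≤ m) (β : Fin m → ℂ) (hβ : ∀ i, β i ≠ 0) (v : Fin s → Fin m → ℤ)
    (hv : LinearIndependent ℚ (fun k : Fin s => fun i : Fin m => ((v k i : ℚ))))
    (hrel : ∀ k : Fin s, ∃ d : ℤ,
      (∏ i : Fin m, β i ^ (v k i)) * (-(q : ℂ)) ^ d = 1) :
    Module.rank ℚ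
      (Submodule.span ℚ ((Set.range fun i : Fin m => Complex.arg (β i)) ∪ {Real.pi}))
      ≤ (m + 1 - s : ℕ) := by
  classical
  set g : Fin (m + 1) → ℝ := Fin.snoc (fun i => Complex.arg (β i)) Real.pi with hg
  have hrange : ((Set.range fun i : Fin m => Complex.arg (β i)) ∪ {Real.pi}) = Set.range g := by
    ext x
    constructor
    · rintro (⟨i, rfl⟩ | rfl)
      · exact ⟨i.castSucc, by simp [hg]⟩
      · exact ⟨Fin.last m, by simp [hg]⟩
    · rintro ⟨j, rfl⟩
      induction j using Fin.lastCases with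
      | last => right; simp [hg]
      | cast i => left; exact ⟨i, by simp [hg]⟩
  rw [hrange, ← Fintype.range_linearCombination ℚ g]
  set φ := Fintype.linearCombination ℚ g with hφ'
  choose d hd using hrel
  choose n hn using fun k => arg_relation q hq β hβ (v k) (d k) (hd k)
  set w : Fin s → (Fin (m + 1) → ℚ) :=
    fun k => Fin.snoc (fun i => (v k i : ℚ)) ((d k : ℚ) - 2 * n k) with hw
  have hker : ∀ k, w k ∈ LinearMap.ker φ := by
    intro k
    rw [LinearMap.mem_ker, hφ', Fintype.linearCombination_apply, Fin.sum_univ_castSucc]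
    have := hn k
    simp only [hw, hg, Fin.snoc_castSucc, Fin.snoc_last, Rat.smul_def]
    push_cast
    linarith [this]
  have hwind : LinearIndependent ℚ w := by
    apply LinearIndependent.of_comp (LinearMap.funLeft ℚ ℚ (Fin.castSucc : Fin m → Fin (m + 1)))
    convert hv using 1
    ext k i
    simp [hw, LinearMap.funLeft]
  have hker_rank : s ≤ Module.finrank ℚ (LinearMap.ker φ) := by
    have hli : LinearIndependent ℚ (fun k => (⟨w k, hker k⟩ : LinearMap.ker φ)) := by
      apply LinearIndependent.of_comp (LinearMap.ker φ).subtype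
      exact hwind
    simpa using hli.fintype_card_le_finrank
  have hsum := LinearMap.finrank_range_add_finrank_ker φ
  have hdom : Module.finrank ℚ (Fin (m + 1) → ℚ) = m + 1 := by simp
  have hfin : Module.finrank ℚ (LinearMap.range φ) ≤ m + 1 - s := by omega
  rw [← Module.finrank_eq_rank]
  exact_mod_cast hfin
end
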